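/- arXiv:2403.07387 — 8 statements merged into one kernel-verified Lean document; each statement's English description precedes it below -/
import Mathlib

section
/- The number of classical parking functions of length n (sequences (a_1,...,a_n) of positive integers whose nondecreasing rearrangement a'_1 ≤ ... ≤ a'_n satisfies a'_i ≤ i for all i) is (n+1)^(n-1). -/
open Finset

/-- A classical parking function of length `n`: a sequence of positive integers
whose nondecreasing rearrangement `a'₁ ≤ ⋯ ≤ a'ₙ` satisfies `a'ᵢ ≤ i`. -/
def IsParkingFunction (n : ℕ) (a : Fin n → ℕ) : Prop :=
  (∀ i, 1 ≤ a i) ∧ ∃ σ : Equiv.Perm (Fin n),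
    Monotone (a ∘ σ) ∧ ∀ i : Fin n, a (σ i) ≤ (i : ℕ) + 1

def pfCount (n : ℕ) (a : Fin n → ℕ) : Prop :=
  ∀ k, k ≤ n → k ≤ (univ.filter fun i => a i ≤ k).card

lemma aux_card_lt (n k : ℕ) (h : k ≤ n) :
    (univ.filter fun j : Fin n => (j : ℕ) < k).card = k := by
  rw [← Fintype.card_subtype]
  rw [Fintype.card_eq_nat_card, Nat.card_eq_of_bijective (fun j => (⟨j.1, j.2⟩ : Fin k))]
  · simp
  · constructor
    · rintro ⟨a, ha⟩ ⟨b, hb⟩ hab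
      simpa [Fin.ext_iff] using hab
    · rintro ⟨j, hj⟩
      exact ⟨⟨⟨j, hj.trans_le h⟩, by simpa using hj⟩, rfl⟩

lemma park_iff (n : ℕ) (a : Fin n → ℕ) :
    IsParkingFunction n a ↔ (∀ i, 1 ≤ a i) ∧ pfCount n a := by
  constructor
  · rintro ⟨h1, σ, hm, hle⟩
    refine ⟨h1, fun k hk => ?_⟩
    have hsub : (univ.filter fun j : Fin n => (j : ℕ) < k).map σ.toEmbedding ⊆
        univ.filter fun i => a i ≤ k := by
      intro i hi
      simp only [mem_map, mem_filter, mem_univ, true_and, Equiv.coe_toEmbedding] at hi ⊢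
      obtain ⟨j, hj, rfl⟩ := hi
      exact (hle j).trans hj
    calc k = ((univ.filter fun j : Fin n => (j : ℕ) < k).map σ.toEmbedding).card := by
            rw [Finset.card_map, aux_card_lt n k hk]
      _ ≤ _ := Finset.card_le_card hsub
  · rintro ⟨h1, hc⟩
    refine ⟨h1, Tuple.sort a, Tuple.monotone_sort a, fun i => ?_⟩
    set σ := Tuple.sort a with hσ
    set k := (i : ℕ) + 1 with hk
    have hkn : k ≤ n := i.2
    have hmap : (univ.filter fun j : Fin n => a (σ j) ≤ k).map σ.toEmbedding =
        univ.filter fun i => a i ≤ k := by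
      ext x
      simp only [mem_map, mem_filter, mem_univ, true_and, Equiv.coe_toEmbedding]
      constructor
      · rintro ⟨j, hj, rfl⟩; exact hj
      · intro hx; exact ⟨σ.symm x, by simpa using hx, by simp⟩
    have hcard : k ≤ (univ.filter fun j : Fin n => a (σ j) ≤ k).card := by
      have := hc k hkn
      rwa [← hmap, Finset.card_map] at this
    have hex : ∃ j : Fin n, i ≤ j ∧ a (σ j) ≤ k := by
      by_contra hno
      push_neg at hno
      have hsub : (univ.filter fun j : Fin n => a (σ j) ≤ k) ⊆
          univ.filter fun j : Fin n => (j : ℕ) < (i : ℕ) := by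
        intro j hj
        simp only [mem_filter, mem_univ, true_and] at hj ⊢
        have := hno j
        rcases lt_or_ge j i with h | h
        · exact h
        · exact absurd hj (by simpa using hno j h)
      have := (Finset.card_le_card hsub).trans_eq (aux_card_lt n i (le_of_lt i.2))
      omega
    obtain ⟨j, hij, hajk⟩ := hex
    have := Tuple.monotone_sort a hij
    simp only [Function.comp_apply] at this
    exact this.trans hajk


def pfQ (n : ℕ) (b : Fin n → ZMod (n+1)) : Prop :=
  ∀ k, k ≤ n → k ≤ (univ.filter fun i => (b i).val < k).card

def cntF {n : ℕ} (b : Fin n → ZMod (n+1)) (j : ℕ) : ℤ :=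
  ((univ.filter fun i => (b i).val = j % (n+1)).card : ℤ)

def HF {n : ℕ} (b : Fin n → ZMod (n+1)) (t : ℕ) : ℤ :=
  (∑ j ∈ range t, cntF b j) - t

lemma cnt_period {n : ℕ} (b : Fin n → ZMod (n+1)) (j : ℕ) :
    cntF b (j + (n+1)) = cntF b j := by
  simp [cntF, Nat.add_mod_right]

lemma HF_succ {n : ℕ} (b : Fin n → ZMod (n+1)) (t : ℕ) :
    HF b (t+1) = HF b t + cntF b t - 1 := by
  simp [HF, sum_range_succ]; ring

lemma sum_cnt {n : ℕ} (b : Fin n → ZMod (n+1)) :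
    ∑ j ∈ range (n+1), cntF b j = n := by
  have h : (univ : Finset (Fin n)).card =
      ∑ j ∈ range (n+1), (univ.filter fun i => (b i).val = j).card :=
    Finset.card_eq_sum_card_fiberwise (fun i _ => mem_range.2 (ZMod.val_lt (b i)))
  have h2 : ∀ j ∈ range (n+1), cntF b j = ((univ.filter fun i => (b i).val = j).card : ℤ) := by
    intro j hj
    simp [cntF, Nat.mod_eq_of_lt (mem_range.1 hj)]
  rw [Finset.sum_congr rfl h2]
  rw [← Nat.cast_sum, ← h]
  simp

lemma HF_shift {n : ℕ} (b : Fin n → ZMod (n+1)) (t : ℕ) :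
    HF b (t + (n+1)) = HF b t - 1 := by
  induction t with
  | zero =>
    simp [HF, sum_cnt b]
  | succ t ih =>
    have : t + 1 + (n+1) = (t + (n+1)) + 1 := by ring
    rw [this, HF_succ, ih, cnt_period, HF_succ]
    ring

lemma window_count {n : ℕ} (b : Fin n → ZMod (n+1)) (u k : ℕ)
    (hu : u < n+1) (hk : k ≤ n+1) :
    ((univ.filter fun i => (b i - (u : ZMod (n+1))).val < k).card : ℤ) =
      HF b (u+k) - HF b u + k := by
  have hIco : HF b (u+k) - HF b u + k = ∑ j ∈ Ico u (u+k), cntF b j := by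
    rw [Finset.sum_Ico_eq_sub _ (Nat.le_add_right u k)]
    simp [HF]; ring
  rw [hIco]
  have hfib : (univ.filter fun i => (b i - (u : ZMod (n+1))).val < k).card =
      ∑ j ∈ Ico u (u+k),
        ((univ.filter fun i => (b i - (u : ZMod (n+1))).val < k).filter
          (fun i => u + (b i - (u : ZMod (n+1))).val = j)).card := by
    apply Finset.card_eq_sum_card_fiberwise
    intro i hi
    simp only [Finset.mem_coe, mem_filter, mem_univ, true_and] at hi
    exact mem_Ico.2 ⟨Nat.le_add_right _ _, by beta_reduce; omega⟩
  rw [hfib]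
  push_cast
  apply Finset.sum_congr rfl
  intro j hj
  rw [mem_Ico] at hj
  rw [cntF]
  congr 1
  congr 1
  ext i
  simp only [mem_filter, mem_univ, true_and]
  constructor
  · rintro ⟨hlt, heq⟩
    have hw : (b i - (u : ZMod (n+1))).val = j - u := by omega
    have : b i = ((u + (j - u) : ℕ) : ZMod (n+1)) := by
      push_cast
      have : b i - (u : ZMod (n+1)) = ((j - u : ℕ) : ZMod (n+1)) := by
        rw [← hw, ZMod.natCast_val, ZMod.cast_id]
      rw [← this]; ring
    rw [this, ZMod.val_natCast]
    congr 1
    omega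
  · intro hval
    have hbi : b i = ((j : ℕ) : ZMod (n+1)) := by
      have : b i = (((b i).val : ℕ) : ZMod (n+1)) := by
        rw [ZMod.natCast_val, ZMod.cast_id]
      rw [this, hval]
      rw [ZMod.natCast_mod]
    have hsub : b i - (u : ZMod (n+1)) = ((j - u : ℕ) : ZMod (n+1)) := by
      rw [hbi, ← Nat.cast_sub hj.1]
    have hval2 : (b i - (u : ZMod (n+1))).val = j - u := by
      rw [hsub, ZMod.val_natCast, Nat.mod_eq_of_lt (by omega)]
    constructor
    · omega
    · omega

def shiftCond {n : ℕ} (b : Fin n → ZMod (n+1)) (u : ℕ) : Prop :=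
  ∀ k, k ≤ n → HF b u ≤ HF b (u + k)

lemma exists_unique_shift {n : ℕ} (b : Fin n → ZMod (n+1)) :
    ∃! u : ℕ, u < n+1 ∧ shiftCond b u := by
  haveI : DecidablePred (fun t => ∀ s ∈ range (n+1), HF b t ≤ HF b s) :=
    fun t => Finset.decidableDforallFinset
  set T : Finset ℕ := (range (n+1)).filter
    (fun t => ∀ s ∈ range (n+1), HF b t ≤ HF b s) with hT
  have hTne : T.Nonempty := by
    obtain ⟨t, ht, hmin⟩ := Finset.exists_min_image (range (n+1)) (HF b) ⟨0, by simp⟩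
    exact ⟨t, mem_filter.2 ⟨ht, hmin⟩⟩
  set u := T.min' hTne with hu
  have huT : u ∈ T := T.min'_mem hTne
  have huR : u < n+1 := mem_range.1 (mem_filter.1 huT).1
  have humin : ∀ s ∈ range (n+1), HF b u ≤ HF b s := (mem_filter.1 huT).2
  -- key: u is the min' hence strict below u
  have hstrict : ∀ s, s < u → HF b u < HF b s := by
    intro s hs
    have hsR : s ∈ range (n+1) := mem_range.2 (hs.trans huR)
    rcases lt_or_eq_of_le (humin s hsR) with h | h
    · exact h
    · exfalso
      have hsT : s ∈ T := mem_filter.2 ⟨hsR, fun r hr => h ▸ humin r hr⟩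
      exact absurd (T.min'_le s hsT) (by omega)
  have hcond : shiftCond b u := by
    intro k hk
    rcases lt_or_ge (u + k) (n+1) with h | h
    · exact humin _ (mem_range.2 h)
    · have h2 : u + k = (u + k - (n+1)) + (n+1) := by omega
      rw [h2, HF_shift]
      have : u + k - (n+1) < u := by omega
      have := hstrict _ this
      omega
  refine ⟨u, ⟨huR, hcond⟩, ?_⟩
  rintro v ⟨hvR, hv⟩
  -- v is a minimizer
  have hvmin : ∀ s ∈ range (n+1), HF b v ≤ HF b s := by
    intro s hs
    rw [mem_range] at hs
    rcases le_or_gt v s with h | h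
    · have : s = v + (s - v) := by omega
      rw [this]
      exact hv _ (by omega)
    · have h2 : HF b v ≤ HF b (v + (s + n + 1 - v)) := hv _ (by omega)
      have h3 : v + (s + n + 1 - v) = s + (n+1) := by omega
      rw [h3, HF_shift] at h2
      omega
  have hvT : v ∈ T := mem_filter.2 ⟨mem_range.2 hvR, hvmin⟩
  -- v ≤ u : suppose t ∈ T with t < v leads to contradiction, in particular need v = min'
  have hle : u ≤ v := T.min'_le v hvT
  rcases eq_or_lt_of_le hle with h | h
  · exact h.symm
  · exfalso
    -- u < v, u ∈ T minimizer, HF b u = HF b v, then shift from v hits u + (n+1)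
    have hequ : HF b u = HF b v := le_antisymm (humin v (mem_range.2 hvR)) (hvmin u (mem_range.2 huR))
    have h2 : HF b v ≤ HF b (v + (u + n + 1 - v)) := hv _ (by omega)
    have h3 : v + (u + n + 1 - v) = u + (n+1) := by omega
    rw [h3, HF_shift] at h2
    omega

lemma pfQ_iff_shift {n : ℕ} (b : Fin n → ZMod (n+1)) (c : ZMod (n+1)) :
    pfQ n (fun i => b i + c) ↔ shiftCond b ((-c).val) := by
  set u := (-c).val with hu
  have huR : u < n+1 := ZMod.val_lt (-c)
  have hbc : ∀ i, b i + c = b i - (u : ZMod (n+1)) := by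
    intro i
    have : ((u : ℕ) : ZMod (n+1)) = -c := by
      rw [hu, ZMod.natCast_val, ZMod.cast_id]
    rw [this]; ring
  constructor
  · intro h k hk
    have h2 := h k hk
    have h3 := window_count b u k huR (by omega)
    have h4 : (univ.filter fun i => ((b i + c)).val < k) =
        (univ.filter fun i => (b i - (u : ZMod (n+1))).val < k) := by
      apply filter_congr; intro i _; rw [hbc i]
    rw [h4] at h2
    have : (k : ℤ) ≤ ((univ.filter fun i => (b i - (u : ZMod (n+1))).val < k).card : ℤ) := by
      exact_mod_cast h2
    omega
  · intro h k hk
    have h2 := h k hk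
    have h3 := window_count b u k huR (by omega)
    have h4 : (univ.filter fun i => ((b i + c)).val < k) =
        (univ.filter fun i => (b i - (u : ZMod (n+1))).val < k) := by
      apply filter_congr; intro i _; rw [hbc i]
    rw [h4]
    have : (k : ℤ) ≤ ((univ.filter fun i => (b i - (u : ZMod (n+1))).val < k).card : ℤ) := by
      omega
    exact_mod_cast this

lemma exists_unique_c {n : ℕ} (b : Fin n → ZMod (n+1)) :
    ∃! c : ZMod (n+1), pfQ n (fun i => b i + c) := by
  obtain ⟨u, ⟨huR, hcond⟩, huniq⟩ := exists_unique_shift b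
  refine ⟨-(u : ZMod (n+1)), ?_, ?_⟩
  · show pfQ n fun i => b i + (-(u : ZMod (n+1)))
    rw [pfQ_iff_shift]
    have : (-(-(u : ZMod (n+1)))).val = u := by
      rw [neg_neg, ZMod.val_cast_of_lt huR]
    rwa [this]
  · intro c' hc'
    rw [pfQ_iff_shift] at hc'
    have h1 : (-c').val = u := huniq _ ⟨ZMod.val_lt _, hc'⟩
    have : -c' = (u : ZMod (n+1)) := by
      rw [← h1, ZMod.natCast_val, ZMod.cast_id]
    rw [← this, neg_neg]

lemma card_pfQ (n : ℕ) :
    Nat.card {b : Fin n → ZMod (n+1) // pfQ n b} * (n+1) = (n+1)^n := by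
  have hG : Function.Bijective
      (fun p : {b : Fin n → ZMod (n+1) // pfQ n b} × ZMod (n+1) =>
        (fun i => p.1.1 i + p.2 : Fin n → ZMod (n+1))) := by
    constructor
    · rintro ⟨⟨a, ha⟩, c⟩ ⟨⟨a', ha'⟩, c'⟩ h
      simp only at h
      have hfun : ∀ i, a i + c = a' i + c' := fun i => congrFun h i
      have h0 : pfQ n (fun i => a i + 0) := by simpa using ha
      have hd : pfQ n (fun i => a i + (c - c')) := by
        have he : (fun i => a i + (c - c')) = a' := by
          funext i
          calc a i + (c - c') = (a i + c) - c' := by ring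
            _ = (a' i + c') - c' := by rw [hfun i]
            _ = a' i := by ring
        rw [he]; exact ha'
      have hcc : c - c' = 0 := (exists_unique_c a).unique hd h0
      have hc : c = c' := by
        have := sub_eq_zero.mp hcc; exact this
      have hA : a = a' := by
        funext i
        have := hfun i
        rw [hc] at this
        exact add_right_cancel this
      subst hc; subst hA
      rfl
    · intro f
      obtain ⟨c, hc, -⟩ := exists_unique_c f
      refine ⟨⟨⟨fun i => f i + c, hc⟩, -c⟩, ?_⟩
      funext i; simp
  have key := Nat.card_congr (Equiv.ofBijective _ hG)
  rw [Nat.card_prod, Nat.card_fun, Nat.card_zmod, Nat.card_eq_fintype_card (α := Fin n),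
    Fintype.card_fin] at key
  exact key


theorem count_parking_functions (n : ℕ) :
    {a : Fin n → ℕ | IsParkingFunction n a}.ncard = (n + 1) ^ (n - 1) := by
  classical
  set φ : (Fin n → ZMod (n+1)) → (Fin n → ℕ) := fun b i => (b i).val + 1 with hφ
  have hinj : Function.Injective φ := by
    intro b b' h
    funext i
    apply ZMod.val_injective
    have := congrFun h i
    simpa [hφ] using this
  have himg : {a : Fin n → ℕ | IsParkingFunction n a} = φ '' {b | pfQ n b} := by
    ext a
    simp only [Set.mem_setOf_eq, Set.mem_image]
    rw [park_iff]
    constructor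
    · rintro ⟨h1, hc⟩
      have hbnd : ∀ i, a i ≤ n := by
        intro i
        have hn := hc n le_rfl
        have hcardle : (univ.filter fun j => a j ≤ n).card ≤ n := by
          calc (univ.filter fun j => a j ≤ n).card ≤ (univ : Finset (Fin n)).card :=
                card_filter_le _ _
            _ = n := by simp
        have heq : (univ.filter fun j => a j ≤ n) = univ := by
          apply Finset.eq_univ_of_card
          have : Fintype.card (Fin n) = n := Fintype.card_fin n
          omega
        have : i ∈ (univ.filter fun j => a j ≤ n) := by rw [heq]; exact mem_univ i
        exact (mem_filter.1 this).2
      have hval : ∀ i, ((a i - 1 : ℕ) : ZMod (n+1)).val = a i - 1 := by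
        intro i
        exact ZMod.val_cast_of_lt (by have := hbnd i; omega)
      refine ⟨fun i => ((a i - 1 : ℕ) : ZMod (n+1)), ?_, ?_⟩
      · intro k hk
        have hfe : (univ.filter fun i => ((a i - 1 : ℕ) : ZMod (n+1)).val < k) =
            (univ.filter fun i => a i ≤ k) := by
          apply filter_congr
          intro i _
          rw [hval i]
          have := h1 i
          constructor
          · intro h; omega
          · intro h; omega
        rw [hfe]
        exact hc k hk
      · funext i
        simp only [hφ, hval i]
        have := h1 i
        omega
    · rintro ⟨b, hQ, rfl⟩
      constructor
      · intro i; simp [hφ]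
      · intro k hk
        have hfe : (univ.filter fun i => φ b i ≤ k) =
            (univ.filter fun i => (b i).val < k) := by
          apply filter_congr
          intro i _
          simp only [hφ, decide_eq_true_eq]
          omega
        rw [hfe]
        exact hQ k hk
  rw [himg, Set.ncard_image_of_injective _ hinj]
  have h1 : {b : Fin n → ZMod (n+1) | pfQ n b}.ncard = Nat.card {b : Fin n → ZMod (n+1) // pfQ n b} := by
    rw [← Nat.card_coe_set_eq]
    rfl
  rw [h1]
  have hkey := card_pfQ n
  rcases n with _ | m
  · simpa using hkey
  · have hp : (m+1+1)^(m+1) = (m+1+1)^m * (m+1+1) := by rw [pow_succ]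
    rw [hp] at hkey
    have := Nat.eq_of_mul_eq_mul_right (Nat.succ_pos _) hkey
    simpa using this
end

section
/- For b = (b_1,...,b_n) with each b_i a positive integer, every b-parking function (β_1,...,β_n) satisfies, for every nonempty subset I of {1,...,n}, the inequality ∑_{i∈I} β_i ≤ ∑_{j=1}^n min(j, |I|) · b_{n-j+1}. -/
/-- Partial sum `S_i = b_1 + ⋯ + b_i`, where `b j` denotes `b_{j+1}` (0-indexed). -/
def Spart (b : ℕ → ℕ) (i : ℕ) : ℕ := ∑ j ∈ Finset.range i, b j

/-- A `b`-parking function: a sequence of positive integers whose nondecreasing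
rearrangement `β'₁ ≤ ⋯ ≤ β'ₙ` satisfies `β'ᵢ ≤ b_1 + ⋯ + b_i`. -/
def IsBParkingFunction (n : ℕ) (b : ℕ → ℕ) (β : Fin n → ℕ) : Prop :=
  (∀ i, 1 ≤ β i) ∧ ∃ σ : Equiv.Perm (Fin n),
    Monotone (β ∘ σ) ∧ ∀ i : Fin n, β (σ i) ≤ Spart b ((i : ℕ) + 1)

lemma strictMono_fin_le {k : ℕ} (g : Fin k → ℕ) (hg : StrictMono g) :
    ∀ i : Fin k, (i : ℕ) ≤ g i := by
  have : ∀ m : ℕ, ∀ i : Fin k, (i : ℕ) = m → m ≤ g i := by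
    intro m
    induction m with
    | zero => intro i _; exact Nat.zero_le _
    | succ m ih =>
      intro i hi
      have hmk : m < k := by omega
      have hlt : (⟨m, hmk⟩ : Fin k) < i := by
        simp [Fin.lt_def, hi]
      have h1 := hg hlt
      have h2 := ih ⟨m, hmk⟩ rfl
      omega
  exact fun i => this (i : ℕ) i rfl

/-- The `t`-th smallest element of a `k`-element subset of `Fin n` is at most `n - k + t`. -/
lemma orderEmb_upper {n k : ℕ} (J : Finset (Fin n)) (hJ : J.card = k) (t : Fin k) :
    ((J.orderIsoOfFin hJ t : Fin n) : ℕ) ≤ n - k + t := by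
  set f : Fin k → Fin n := fun s => (J.orderIsoOfFin hJ s : Fin n) with hf
  have hfmono : StrictMono f := fun a c hac => by
    exact Subtype.coe_lt_coe.mpr ((J.orderIsoOfFin hJ).strictMono hac)
  set g : Fin k → ℕ := fun s => n - 1 - (f s.rev : ℕ) with hgdef
  have hgmono : StrictMono g := by
    intro a c hac
    have h1 : c.rev < a.rev := Fin.rev_lt_rev.mpr hac
    have h2 : f c.rev < f a.rev := hfmono h1
    have h3 : (f a.rev : ℕ) < n := (f a.rev).isLt
    simp only [hgdef]
    omega
  have key := strictMono_fin_le g hgmono t.rev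
  have h4 : (f t : ℕ) < n := (f t).isLt
  have h5 : (t : ℕ) < k := t.isLt
  simp only [hgdef, Fin.val_rev, Fin.rev_rev] at key
  show (f t : ℕ) ≤ n - k + t
  omega

lemma key_sum_eq (n k : ℕ) (b : ℕ → ℕ) (hk : k ≤ n) :
    ∑ t ∈ Finset.range k, Spart b (n - k + t + 1)
      = ∑ j ∈ Finset.range n, min (j + 1) k * b (n - 1 - j) := by
  have hrefl := Finset.sum_range_reflect (fun j => min (j + 1) k * b (n - 1 - j)) n
  rw [← hrefl]
  have hRHS : ∑ j ∈ Finset.range n, min (n - 1 - j + 1) k * b (n - 1 - (n - 1 - j))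
      = ∑ j ∈ Finset.range n, min (n - j) k * b j := by
    apply Finset.sum_congr rfl
    intro j hj
    rw [Finset.mem_range] at hj
    congr 2 <;> omega
  rw [hRHS]
  -- expand LHS and interchange
  have hLHS : ∀ t ∈ Finset.range k, Spart b (n - k + t + 1)
      = ∑ m ∈ Finset.range n, if m ∈ Finset.range (n - k + t + 1) then b m else 0 := by
    intro t ht
    rw [Finset.mem_range] at ht
    rw [Finset.sum_ite_mem, Spart,
      Finset.inter_eq_right.mpr (Finset.range_subset_range.mpr (by omega : n - k + t + 1 ≤ n))]
  rw [Finset.sum_congr rfl hLHS, Finset.sum_comm]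
  apply Finset.sum_congr rfl
  intro m hm
  rw [Finset.mem_range] at hm
  have hfilter : ∀ t ∈ Finset.range k,
      (if m ∈ Finset.range (n - k + t + 1) then b m else 0)
        = if m - (n - k) ≤ t then b m else 0 := by
    intro t ht
    rw [Finset.mem_range] at ht
    simp only [Finset.mem_range]
    congr 1
    simp only [eq_iff_iff]
    omega
  rw [Finset.sum_congr rfl hfilter, Finset.sum_ite, Finset.sum_const, Finset.sum_const,
    smul_eq_mul, smul_eq_mul, mul_zero, add_zero]
  have : Finset.filter (fun t => m - (n - k) ≤ t) (Finset.range k)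
      = Finset.Ico (m - (n - k)) k := by
    ext t
    simp only [Finset.mem_filter, Finset.mem_range, Finset.mem_Ico]
    omega
  rw [this, Nat.card_Ico]
  congr 1
  omega

/-- Every `b`-parking function satisfies, for every nonempty `I ⊆ [n]`,
`∑_{i∈I} β_i ≤ ∑_{j=1}^n min(j,|I|)·b_{n-j+1}`. -/
theorem bparking_subset_inequality (n : ℕ) (b : ℕ → ℕ) (hb : ∀ j < n, 1 ≤ b j)
    (β : Fin n → ℕ) (hβ : IsBParkingFunction n b β)
    (I : Finset (Fin n)) (hI : I.Nonempty) :
    ∑ i ∈ I, β i ≤ ∑ j ∈ Finset.range n, min (j + 1) I.card * b (n - 1 - j) := by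
  obtain ⟨hpos, σ, hmono, hle⟩ := hβ
  set k := I.card with hk
  have hkn : k ≤ n := by
    simpa using Finset.card_le_univ I
  set J : Finset (Fin n) := I.map σ.symm.toEmbedding with hJdef
  have hJcard : J.card = k := by simp [hJdef, hk]
  have h1 : ∑ i ∈ I, β i = ∑ j ∈ J, β (σ j) := by
    rw [hJdef, Finset.sum_map]
    simp
  have h2 : ∑ j ∈ J, β (σ j) = ∑ t : Fin k, β (σ (J.orderIsoOfFin hJcard t : Fin n)) := by
    rw [← Finset.sum_attach J (fun j => β (σ j))]
    exact (Fintype.sum_equiv (J.orderIsoOfFin hJcard).toEquiv _ _ (fun t => rfl)).symm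
  have h3 : ∑ t : Fin k, β (σ (J.orderIsoOfFin hJcard t : Fin n))
      ≤ ∑ t : Fin k, Spart b (n - k + (t : ℕ) + 1) := by
    apply Finset.sum_le_sum
    intro t _
    calc β (σ (J.orderIsoOfFin hJcard t : Fin n))
        ≤ Spart b (((J.orderIsoOfFin hJcard t : Fin n) : ℕ) + 1) := hle _
      _ ≤ Spart b (n - k + (t : ℕ) + 1) := by
          apply Finset.sum_le_sum_of_subset
          apply Finset.range_subset_range.mpr
          have := orderEmb_upper J hJcard t
          omega
  have h4 : ∑ t : Fin k, Spart b (n - k + (t : ℕ) + 1)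
      = ∑ t ∈ Finset.range k, Spart b (n - k + t + 1) :=
    Fin.sum_univ_eq_sum_range (fun t => Spart b (n - k + t + 1)) k
  rw [h1, h2, ← key_sum_eq n k b hkn]
  rw [h4] at h3
  exact h3
end

section
/- For b = (b_1,...,b_n) ∈ ℤ_{>0}^n with b_1 = 1, the number of vertices of the b-parking-function polytope X_n(b) is n!·(1/1! + 1/2! + ... + 1/n!); equivalently, the number of distinct points of the form π(y_k) for π ∈ S_n and 0 ≤ k ≤ n equals n!·∑_{j=1}^{n} 1/j!. -/
open Nat

lemma Spart_lt {b : ℕ → ℕ} {n : ℕ} (hb : ∀ j < n, 1 ≤ b j) {m m' : ℕ}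
    (h : m < m') (h' : m' ≤ n) : Spart b m < Spart b m' := by
  have key : Spart b m + ∑ j ∈ Finset.Ico m m', b j = Spart b m' := by
    unfold Spart
    rw [Finset.range_eq_Ico, Finset.range_eq_Ico]
    exact Finset.sum_Ico_consecutive b (Nat.zero_le m) (le_of_lt h)
  have hpos : 1 ≤ ∑ j ∈ Finset.Ico m m', b j :=
    le_trans (hb m (lt_of_lt_of_le h h'))
      (Finset.single_le_sum (f := b) (fun j _ => Nat.zero_le _)
        (Finset.mem_Ico.mpr ⟨le_refl m, h⟩))
  omega

/-- The vector with value `S_{K+j+1}` at position `e j` and `1` elsewhere. -/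
noncomputable def gfun (b : ℕ → ℕ) (n K : ℕ) (e : Fin (n - K) ↪ Fin n) : Fin n → ℕ :=
  fun i => if h : ∃ j, e j = i then Spart b (K + ((h.choose : Fin (n - K)) : ℕ) + 1) else 1

lemma gfun_apply (b : ℕ → ℕ) (n K : ℕ) (e : Fin (n - K) ↪ Fin n) (j : Fin (n - K)) :
    gfun b n K e (e j) = Spart b (K + (j : ℕ) + 1) := by
  have h : ∃ j', e j' = e j := ⟨j, rfl⟩
  have hj : h.choose = j := e.injective h.choose_spec
  unfold gfun
  rw [dif_pos h, hj]

lemma gfun_not_mem (b : ℕ → ℕ) (n K : ℕ) (e : Fin (n - K) ↪ Fin n) (i : Fin n)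
    (hi : ∀ j, e j ≠ i) : gfun b n K e i = 1 := by
  unfold gfun
  rw [dif_neg]
  rintro ⟨j, hj⟩
  exact hi j hj

/-- Construction: every `π(y_k)` is of the form `gfun b n K e`. -/
lemma gfun_constr (n : ℕ) (b : ℕ → ℕ) (π : Equiv.Perm (Fin n)) (k K : ℕ)
    (hKn : K ≤ n) (hkK : k ≤ K)
    (hker : ∀ m, k ≤ m → m < K → Spart b (m + 1) = 1) :
    ∃ e : Fin (n - K) ↪ Fin n,
      (fun i => if ((π i : Fin n) : ℕ) < k then 1 else Spart b (((π i : Fin n) : ℕ) + 1))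
        = gfun b n K e := by
  let e : Fin (n - K) ↪ Fin n :=
    ⟨fun j => π.symm ⟨K + (j : ℕ), by have := j.isLt; omega⟩, by
      intro a c h
      have h2 := π.symm.injective h
      have h3 : K + (a : ℕ) = K + (c : ℕ) := congrArg Fin.val h2
      exact Fin.ext (by omega)⟩
  refine ⟨e, funext fun i => ?_⟩
  by_cases hmem : K ≤ ((π i : Fin n) : ℕ)
  · have hj : ((π i : Fin n) : ℕ) - K < n - K := by have := (π i).isLt; omega
    have he : e ⟨((π i : Fin n) : ℕ) - K, hj⟩ = i := by
      show π.symm ⟨K + (((π i : Fin n) : ℕ) - K), _⟩ = i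
      have h4 : (⟨K + (((π i : Fin n) : ℕ) - K), by have := (π i).isLt; omega⟩ : Fin n) = π i :=
        Fin.ext (by simp; omega)
      rw [h4]
      exact π.symm_apply_apply i
    conv_rhs => rw [← he, gfun_apply]
    simp only
    rw [if_neg (by omega)]
    congr 1
    omega
  · have h1 : gfun b n K e i = 1 := by
      apply gfun_not_mem
      intro j hj
      have h2 : ((π i : Fin n) : ℕ) = K + (j : ℕ) := by
        have h3 : π i = π (e j) := by rw [hj]
        have h4 : π (e j) = ⟨K + (j : ℕ), by have := j.isLt; omega⟩ := by
          show π (π.symm _) = _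
          exact π.apply_symm_apply _
        rw [h3, h4]
      exact hmem (by omega)
    rw [h1]
    by_cases hik : ((π i : Fin n) : ℕ) < k
    · rw [if_pos hik]
    · rw [if_neg hik]
      exact hker _ (le_of_not_gt hik) (lt_of_not_ge hmem)

/-- The global parametrization map. -/
noncomputable def Gmap (b : ℕ → ℕ) (n : ℕ) :
    (Σ k : Fin n, (Fin (n - ((k : ℕ) + 1)) ↪ Fin n)) → (Fin n → ℕ) :=
  fun p => gfun b n ((p.1 : ℕ) + 1) p.2

lemma Gmap_ne_one_iff (b : ℕ → ℕ) (n : ℕ) (hb : ∀ j < n, 1 ≤ b j)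
    (k : Fin n) (e : Fin (n - ((k : ℕ) + 1)) ↪ Fin n) (i : Fin n) :
    Gmap b n ⟨k, e⟩ i ≠ 1 ↔ i ∈ Set.range ⇑e := by
  constructor
  · intro h1
    by_contra hm
    exact h1 (gfun_not_mem _ _ _ _ _ (fun j hj => hm ⟨j, hj⟩))
  · rintro ⟨j, rfl⟩
    have h2 : Gmap b n ⟨k, e⟩ (e j) = Spart b (((k : ℕ) + 1) + (j : ℕ) + 1) :=
      gfun_apply b n ((k : ℕ) + 1) e j
    have h3 : Spart b 1 < Spart b (((k : ℕ) + 1) + (j : ℕ) + 1) :=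
      Spart_lt hb (by omega) (by have := j.isLt; have := k.isLt; omega)
    have h4 : 1 ≤ Spart b 1 := by
      have := hb 0 (by have := k.isLt; omega)
      simp [Spart]
      omega
    omega

lemma Gmap_inj (b : ℕ → ℕ) (n : ℕ) (hb : ∀ j < n, 1 ≤ b j) :
    Function.Injective (Gmap b n) := by
  rintro ⟨k, e⟩ ⟨k', e'⟩ h
  have hrange : Set.range ⇑e = Set.range ⇑e' := by
    ext i
    rw [← Gmap_ne_one_iff b n hb k e i, ← Gmap_ne_one_iff b n hb k' e' i, h]
  have hcard : n - ((k : ℕ) + 1) = n - ((k' : ℕ) + 1) := by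
    have c1 : Nat.card (Set.range ⇑e) = n - ((k : ℕ) + 1) := by
      rw [Nat.card_range_of_injective e.injective, Nat.card_eq_fintype_card, Fintype.card_fin]
    have c2 : Nat.card (Set.range ⇑e') = n - ((k' : ℕ) + 1) := by
      rw [Nat.card_range_of_injective e'.injective, Nat.card_eq_fintype_card, Fintype.card_fin]
    rw [← c1, ← c2, hrange]
  have hk : k = k' := by
    have := k.isLt; have := k'.isLt
    exact Fin.ext (by omega)
  subst hk
  have he : e = e' := by
    apply DFunLike.ext
    intro j
    have hmem : e j ∈ Set.range ⇑e' := hrange ▸ ⟨j, rfl⟩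
    obtain ⟨j', hj'⟩ := hmem
    have h1 : Gmap b n ⟨k, e⟩ (e j) = Spart b (((k : ℕ) + 1) + (j : ℕ) + 1) :=
      gfun_apply b n _ e j
    have h2 : Gmap b n ⟨k, e'⟩ (e j) = Spart b (((k : ℕ) + 1) + (j' : ℕ) + 1) := by
      rw [← hj']
      exact gfun_apply b n _ e' j'
    have h3 : Spart b (((k : ℕ) + 1) + (j : ℕ) + 1)
        = Spart b (((k : ℕ) + 1) + (j' : ℕ) + 1) := by
      rw [← h1, ← h2, h]
    have hjj : (j : ℕ) = (j' : ℕ) := by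
      rcases lt_trichotomy (j : ℕ) (j' : ℕ) with hlt | heq | hgt
      · exfalso
        have := Spart_lt hb (m := ((k : ℕ) + 1) + (j : ℕ) + 1)
          (m' := ((k : ℕ) + 1) + (j' : ℕ) + 1) (by omega)
          (by have := j'.isLt; have := k.isLt; omega)
        omega
      · exact heq
      · exfalso
        have := Spart_lt hb (m := ((k : ℕ) + 1) + (j' : ℕ) + 1)
          (m' := ((k : ℕ) + 1) + (j : ℕ) + 1) (by omega)
          (by have := j.isLt; have := k.isLt; omega)
        omega
    rw [← hj']
    congr 1
    exact Fin.ext hjj.symm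
  rw [he]

lemma Gmap_range (n : ℕ) (hn : 1 ≤ n) (b : ℕ → ℕ) (hb : ∀ j < n, 1 ≤ b j)
    (hb1 : b 0 = 1) :
    {v : Fin n → ℕ | ∃ (π : Equiv.Perm (Fin n)) (k : ℕ), k ≤ n ∧
        v = fun i => if ((π i : Fin n) : ℕ) < k then 1 else Spart b (((π i : Fin n) : ℕ) + 1)}
      = Set.range (Gmap b n) := by
  ext v
  constructor
  · rintro ⟨π, k, hk, rfl⟩
    have hK1 : 1 ≤ max k 1 := le_max_right _ _
    have hKn : max k 1 ≤ n := by omega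
    set k' : Fin n := ⟨max k 1 - 1, by omega⟩ with hk'
    have hkv : (k' : ℕ) + 1 = max k 1 := by
      simp only [hk']
      omega
    obtain ⟨e, hv⟩ := gfun_constr n b π k ((k' : ℕ) + 1) (by omega) (by omega)
      (by
        intro m hm1 hm2
        have hm0 : m = 0 := by omega
        subst hm0
        simp [Spart, hb1])
    exact ⟨⟨k', e⟩, hv.symm⟩
  · rintro ⟨⟨k, e⟩, rfl⟩
    classical
    have hKn : (k : ℕ) + 1 ≤ n := k.isLt
    have hcast : ∀ j : Fin (n - ((k : ℕ) + 1)), (k : ℕ) + 1 + (j : ℕ) < n := by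
      intro j; have := j.isLt; omega
    let eq2 : Fin (n - ((k : ℕ) + 1)) ≃ {i : Fin n // (k : ℕ) + 1 ≤ (i : ℕ)} :=
      { toFun := fun j => ⟨⟨(k : ℕ) + 1 + (j : ℕ), hcast j⟩, Nat.le_add_right _ _⟩
        invFun := fun m => ⟨((m.1 : Fin n) : ℕ) - ((k : ℕ) + 1), by
          have := (m.1).isLt; have := m.2; omega⟩
        left_inv := fun j => Fin.ext (by simp)
        right_inv := fun m => Subtype.ext (Fin.ext (by have := m.2; simp; omega)) }
    let eq1 : {i : Fin n // i ∈ Set.range ⇑e} ≃ {i : Fin n // (k : ℕ) + 1 ≤ (i : ℕ)} :=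
      (Equiv.ofInjective ⇑e e.injective).symm.trans eq2
    refine ⟨eq1.extendSubtype, (k : ℕ) + 1, hKn, ?_⟩
    funext i
    show Gmap b n ⟨k, e⟩ i = _
    by_cases hmem : i ∈ Set.range ⇑e
    · obtain ⟨j, rfl⟩ := hmem
      have h1 : eq1.extendSubtype (e j) = ↑(eq1 ⟨e j, ⟨j, rfl⟩⟩) :=
        eq1.extendSubtype_apply_of_mem _ ⟨j, rfl⟩
      have h2 : (Equiv.ofInjective ⇑e e.injective).symm ⟨e j, ⟨j, rfl⟩⟩ = j := by
        rw [Equiv.symm_apply_eq, Equiv.ofInjective_apply]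
      have h3 : ((eq1.extendSubtype (e j) : Fin n) : ℕ) = (k : ℕ) + 1 + (j : ℕ) := by
        rw [h1]
        show (((eq2 ((Equiv.ofInjective ⇑e e.injective).symm ⟨e j, ⟨j, rfl⟩⟩)) : Fin n) : ℕ) = _
        rw [h2]
        rfl
      rw [h3, if_neg (by omega)]
      show gfun b n ((k : ℕ) + 1) e (e j) = _
      rw [gfun_apply]
    · have h1 : ¬ ((k : ℕ) + 1 ≤ ((eq1.extendSubtype i : Fin n) : ℕ)) :=
        eq1.extendSubtype_not_mem i hmem
      rw [if_pos (by omega)]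
      exact gfun_not_mem _ _ _ _ _ (fun j hj => hmem ⟨j, hj⟩)

/-- When `b_1 = 1`, the number of distinct points `π(y_k)` for `π ∈ S_n`,
`0 ≤ k ≤ n` (the vertices of `X_n(b)`) is `n!·(1/1! + ⋯ + 1/n!)`. -/
theorem vertex_count_b1_eq_one (n : ℕ) (hn : 1 ≤ n) (b : ℕ → ℕ)
    (hb : ∀ j < n, 1 ≤ b j) (hb1 : b 0 = 1) :
    {v : Fin n → ℕ | ∃ (π : Equiv.Perm (Fin n)) (k : ℕ), k ≤ n ∧
        v = fun i => if ((π i : Fin n) : ℕ) < k then 1 else Spart b (((π i : Fin n) : ℕ) + 1)}.ncard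
      = ∑ j ∈ Finset.Icc 1 n, n ! / j ! := by
  classical
  rw [Gmap_range n hn b hb hb1]
  rw [← Nat.card_coe_set_eq, Nat.card_range_of_injective (Gmap_inj b n hb),
    Nat.card_eq_fintype_card, Fintype.card_sigma]
  have hterm : ∀ k : Fin n,
      Fintype.card (Fin (n - ((k : ℕ) + 1)) ↪ Fin n) = n ! / ((k : ℕ) + 1)! := by
    intro k
    rw [Fintype.card_embedding_eq, Fintype.card_fin, Fintype.card_fin,
      Nat.descFactorial_eq_div (by omega)]
    congr 2
    have := k.isLt
    omega
  rw [Finset.sum_congr rfl (fun k _ => hterm k)]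
  rw [Fin.sum_univ_eq_sum_range (fun i => n ! / (i + 1)!) n]
  rw [← Finset.Ico_add_one_right_eq_Icc, Finset.sum_Ico_eq_sum_range]
  exact (Finset.sum_congr (by norm_num) (fun i _ => by rw [Nat.add_comm 1 i])).symm
end

section
/- For b = (b_1,...,b_n) ∈ ℤ_{>0}^n with b_1 ≥ 2, the number of distinct points of the form π(y_k) for π ∈ S_n and 0 ≤ k ≤ n equals n!·(1/0! + 1/1! + ... + 1/n!) = ∑_{k=0}^{n} n!/k!. -/
open Nat

/-- The vector `π(y_k)`. -/
def PhiV (b : ℕ → ℕ) (n k : ℕ) (π : Equiv.Perm (Fin n)) : Fin n → ℕ :=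
  fun i => if ((π i : Fin n) : ℕ) < k then 1 else Spart b (((π i : Fin n) : ℕ) + 1)

lemma Spart_mono (b : ℕ → ℕ) : Monotone (Spart b) := fun _ _ h =>
  Finset.sum_le_sum_of_subset (Finset.range_subset_range.mpr h)

lemma card_filter_lt (n k : ℕ) (h : k ≤ n) :
    (Finset.univ.filter fun j : Fin n => (j : ℕ) < k).card = k := by
  conv_rhs => rw [← Finset.card_range k]
  refine Finset.card_bij' (fun a _ => (a : ℕ))
    (fun m hm => (⟨m, lt_of_lt_of_le (Finset.mem_range.mp hm) h⟩ : Fin n))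
    ?_ ?_ ?_ ?_
  · intro a ha
    exact Finset.mem_range.mpr (Finset.mem_filter.mp ha).2
  · intro m hm
    simpa using Finset.mem_range.mp hm
  · intro a ha; simp
  · intro m hm; simp

/-- When `b_1 ≥ 2`, the number of distinct points `π(y_k)` for `π ∈ S_n`,
`0 ≤ k ≤ n` is `n!·(1/0! + 1/1! + ⋯ + 1/n!) = ∑_{k=0}^n n!/k!`. -/
theorem vertex_count_b1_ge_two (n : ℕ) (b : ℕ → ℕ)
    (hb : ∀ j < n, 1 ≤ b j) (hb1 : 2 ≤ b 0) :
    {v : Fin n → ℕ | ∃ (π : Equiv.Perm (Fin n)) (k : ℕ), k ≤ n ∧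
        v = fun i => if ((π i : Fin n) : ℕ) < k then 1 else Spart b (((π i : Fin n) : ℕ) + 1)}.ncard
      = ∑ k ∈ Finset.range (n + 1), n ! / k ! := by
  classical
  -- basic facts about Spart
  have hmono : ∀ {i j : ℕ}, i < j → j ≤ n → Spart b i < Spart b j := by
    intro i j hij hj
    have h1 : Spart b i < Spart b (i + 1) := by
      have : Spart b (i + 1) = Spart b i + b i := Finset.sum_range_succ b i
      have hbi := hb i (lt_of_lt_of_le hij hj)
      omega
    exact lt_of_lt_of_le h1 (Spart_mono b hij)
  have hge2 : ∀ i : Fin n, 2 ≤ Spart b ((i : ℕ) + 1) := by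
    intro i
    refine le_trans hb1 ?_
    exact Finset.single_le_sum (fun t _ => Nat.zero_le _) (Finset.mem_range.mpr (by omega))
  have hSinj : ∀ i j : Fin n, Spart b ((i : ℕ) + 1) = Spart b ((j : ℕ) + 1) → i = j := by
    intro i j h
    rcases Nat.lt_trichotomy (i : ℕ) (j : ℕ) with hlt | heq | hgt
    · exact absurd h (Nat.ne_of_lt (hmono (by omega) (by omega)))
    · exact Fin.ext heq
    · exact absurd h.symm (Nat.ne_of_lt (hmono (by omega) (by omega)))
  -- the key characterization of when two permutations give the same vector
  have hkey : ∀ (k : ℕ) (π σ : Equiv.Perm (Fin n)),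
      PhiV b n k σ = PhiV b n k π ↔ ∀ a : Fin n, ¬((a : ℕ) < k) → (σ * π⁻¹) a = a := by
    intro k π σ
    constructor
    · intro h a ha
      have hi := congrFun h (π⁻¹ a)
      simp only [PhiV, show π (π⁻¹ a) = a from π.apply_symm_apply a] at hi
      rw [if_neg ha] at hi
      simp only [Equiv.Perm.mul_apply]
      by_cases hs : ((σ (π⁻¹ a) : Fin n) : ℕ) < k
      · rw [if_pos hs] at hi
        have := hge2 a; omega
      · rw [if_neg hs] at hi
        exact hSinj _ _ hi
    · intro h
      have hlow : ∀ a : Fin n, (a : ℕ) < k → ((σ (π⁻¹ a) : Fin n) : ℕ) < k := by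
        intro a ha
        by_contra hc
        have h2 := h _ hc
        simp only [Equiv.Perm.mul_apply] at h2 ⊢
        have h3 : σ (π⁻¹ (σ (π⁻¹ a))) = σ (π⁻¹ a) := h2
        have h4 : π⁻¹ (σ (π⁻¹ a)) = π⁻¹ a := σ.injective h3
        have h5 : σ (π⁻¹ a) = a := π⁻¹.injective h4
        rw [h5] at hc; exact hc ha
      funext i
      simp only [PhiV]
      have hip : i = π⁻¹ (π i) := (π.symm_apply_apply i).symm
      by_cases hpi : ((π i : Fin n) : ℕ) < k
      · rw [if_pos hpi]
        have := hlow (π i) hpi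
        rw [← hip] at this
        rw [if_pos this]
      · rw [if_neg hpi]
        have h2 := h (π i) hpi
        simp only [Equiv.Perm.mul_apply, show π⁻¹ (π i) = i from π.symm_apply_apply i] at h2
        rw [h2, if_neg hpi]
  -- rewrite the set as a finite union of images
  have hset : {v : Fin n → ℕ | ∃ (π : Equiv.Perm (Fin n)) (k : ℕ), k ≤ n ∧
        v = fun i => if ((π i : Fin n) : ℕ) < k then 1 else Spart b (((π i : Fin n) : ℕ) + 1)}
      = ↑((Finset.range (n + 1)).biUnion fun k =>
          Finset.image (PhiV b n k) Finset.univ) := by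
    ext v
    simp only [Set.mem_setOf_eq, Finset.coe_biUnion, Finset.mem_coe, Finset.mem_range,
      Set.mem_iUnion, Finset.mem_image, Finset.mem_univ, true_and, Nat.lt_succ_iff]
    constructor
    · rintro ⟨π, k, hk, rfl⟩; exact ⟨k, hk, π, rfl⟩
    · rintro ⟨k, hk, π, rfl⟩; exact ⟨π, k, hk, rfl⟩
  rw [hset, Set.ncard_coe_finset]
  -- number of ones in a vector determines k
  have hones : ∀ k ≤ n, ∀ π : Equiv.Perm (Fin n),
      (Finset.univ.filter fun i => PhiV b n k π i = 1).card = k := by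
    intro k hk π
    have heq : (Finset.univ.filter fun i => PhiV b n k π i = 1)
        = (Finset.univ.filter fun i => ((π i : Fin n) : ℕ) < k) := by
      ext i
      simp only [Finset.mem_filter, Finset.mem_univ, true_and]
      simp only [PhiV]
      split_ifs with h
      · simp [h]
      · simp only [h, iff_false]
        have := hge2 (π i); omega
    have hcb : (Finset.univ.filter fun i => ((π i : Fin n) : ℕ) < k).card
        = (Finset.univ.filter fun j : Fin n => (j : ℕ) < k).card := by
      refine Finset.card_bij' (fun a _ => π a) (fun a _ => π⁻¹ a) ?_ ?_ ?_ ?_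
      · intro a ha
        simp only [Finset.mem_filter, Finset.mem_univ, true_and] at ha ⊢
        exact ha
      · intro a ha
        simp only [Finset.mem_filter, Finset.mem_univ, true_and] at ha ⊢
        simpa using ha
      · intros; simp
      · intros; simp
    rw [heq, hcb, card_filter_lt n k hk]
  -- disjointness
  have hdisj : ∀ k ∈ Finset.range (n + 1), ∀ l ∈ Finset.range (n + 1), k ≠ l →
      Disjoint (Finset.image (PhiV b n k) Finset.univ)
        (Finset.image (PhiV b n l) Finset.univ) := by
    intro k hk l hl hne
    rw [Finset.disjoint_left]
    rintro v hv hv'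
    obtain ⟨π, _, rfl⟩ := Finset.mem_image.mp hv
    obtain ⟨σ, _, hvs⟩ := Finset.mem_image.mp hv'
    have h1 := hones k (Nat.lt_succ_iff.mp (Finset.mem_range.mp hk)) π
    have h2 := hones l (Nat.lt_succ_iff.mp (Finset.mem_range.mp hl)) σ
    rw [hvs] at h2
    rw [h1] at h2
    exact hne h2
  rw [Finset.card_biUnion hdisj]
  refine Finset.sum_congr rfl ?_
  intro k hk
  have hkn : k ≤ n := by simpa [Nat.lt_succ_iff] using hk
  -- cardinality of each image
  have hfiber : ∀ v ∈ Finset.image (PhiV b n k) Finset.univ,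
      (Finset.univ.filter fun π : Equiv.Perm (Fin n) => PhiV b n k π = v).card = k ! := by
    intro v hv
    obtain ⟨π₀, -, rfl⟩ := Finset.mem_image.mp hv
    have hbij : (Finset.univ.filter fun π : Equiv.Perm (Fin n) => PhiV b n k π = PhiV b n k π₀).card
        = (Finset.univ.filter fun τ : Equiv.Perm (Fin n) =>
            ∀ a : Fin n, ¬((a : ℕ) < k) → τ a = a).card := by
      apply Finset.card_bij' (fun σ _ => σ * π₀⁻¹) (fun τ _ => τ * π₀)
      · intro σ hσ
        simp only [Finset.mem_filter, Finset.mem_univ, true_and] at hσ ⊢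
        exact (hkey k π₀ σ).mp hσ
      · intro τ hτ
        simp only [Finset.mem_filter, Finset.mem_univ, true_and] at hτ ⊢
        apply (hkey k π₀ (τ * π₀)).mpr
        intro a ha
        have : τ * π₀ * π₀⁻¹ = τ := by group
        rw [this]
        exact hτ a ha
      · intro σ _; group
      · intro τ _; group
    rw [hbij]
    have hc1 : (Finset.univ.filter fun τ : Equiv.Perm (Fin n) =>
        ∀ a : Fin n, ¬((a : ℕ) < k) → τ a = a).card
        = Fintype.card {f : Equiv.Perm (Fin n) // ∀ a : Fin n, ¬((a : ℕ) < k) → f a = a} :=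
      (Fintype.card_subtype _).symm
    rw [hc1,
      Fintype.card_congr (Equiv.Perm.subtypeEquivSubtypePerm (fun a : Fin n => (a : ℕ) < k)).symm,
      Fintype.card_perm, Fintype.card_subtype, card_filter_lt n k hkn]
  have hsum : (Finset.univ : Finset (Equiv.Perm (Fin n))).card
      = ∑ v ∈ Finset.image (PhiV b n k) Finset.univ,
        (Finset.univ.filter fun π : Equiv.Perm (Fin n) => PhiV b n k π = v).card :=
    Finset.card_eq_sum_card_fiberwise (fun π _ => Finset.mem_image_of_mem _ (Finset.mem_univ π))
  rw [Finset.sum_congr rfl hfiber, Finset.sum_const, smul_eq_mul, Finset.card_univ,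
    Fintype.card_perm, Fintype.card_fin] at hsum
  rw [hsum, Nat.mul_div_cancel _ (Nat.factorial_pos k)]
end

section
/- The set function f_b : 2^{[n]} → ℤ defined by f_b(∅) = 0 and f_b(I) = -|I| + ∑_{j=1}^{n} min(|I|, j) · b_{n-j+1} for nonempty I is nondecreasing and submodular, i.e., for all X ⊆ Y ⊆ [n] and z ∈ [n] \ Y, f_b(X ∪ {z}) - f_b(X) ≥ f_b(Y ∪ {z}) - f_b(Y). -/
/-- The set function `f_b(I) = -|I| + ∑_{j=1}^n min(|I|,j)·b_{n-j+1}`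
(which takes the value `0` at `∅`). -/
def fSub (n : ℕ) (b : ℕ → ℕ) (I : Finset (Fin n)) : ℤ :=
  -(I.card : ℤ) + ∑ j ∈ Finset.range n, (min I.card (j + 1) : ℤ) * (b (n - 1 - j) : ℤ)

/-- Auxiliary: the value of `fSub` depends only on the cardinality. -/
def gSub (n : ℕ) (b : ℕ → ℕ) (k : ℕ) : ℤ :=
  -(k : ℤ) + ∑ j ∈ Finset.range n, (min k (j + 1) : ℤ) * (b (n - 1 - j) : ℤ)

lemma fSub_eq_gSub (n : ℕ) (b : ℕ → ℕ) (I : Finset (Fin n)) :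
    fSub n b I = gSub n b I.card := rfl

lemma gSub_step (n : ℕ) (b : ℕ → ℕ) (k : ℕ) :
    gSub n b (k + 1) - gSub n b k =
      -1 + ∑ j ∈ (Finset.range n).filter (fun j => k ≤ j), (b (n - 1 - j) : ℤ) := by
  unfold gSub
  rw [Finset.sum_filter]
  have h : ∀ j ∈ Finset.range n,
      (min (k+1) (j + 1) : ℤ) * (b (n - 1 - j) : ℤ) - (min k (j + 1) : ℤ) * (b (n - 1 - j) : ℤ)
        = if k ≤ j then (b (n - 1 - j) : ℤ) else 0 := by
    intro j _
    by_cases hkj : k ≤ j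
    · rw [if_pos hkj]
      have h1 : ((k:ℤ)+1) ⊓ ((j:ℤ)+1) = (k:ℤ)+1 := min_eq_left (by push_cast; omega)
      have h2 : (k:ℤ) ⊓ ((j:ℤ)+1) = (k:ℤ) := min_eq_left (by push_cast; omega)
      push_cast
      rw [h1, h2]
      ring
    · rw [if_neg hkj]
      have h1 : ((k:ℤ)+1) ⊓ ((j:ℤ)+1) = (j:ℤ)+1 := min_eq_right (by push_cast; omega)
      have h2 : (k:ℤ) ⊓ ((j:ℤ)+1) = (j:ℤ)+1 := min_eq_right (by push_cast; omega)
      push_cast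
      rw [h1, h2]
      ring
  rw [← Finset.sum_congr rfl h, Finset.sum_sub_distrib]
  push_cast
  ring

lemma gSub_step_nonneg (n : ℕ) (b : ℕ → ℕ) (hb : ∀ j < n, 1 ≤ b j) (k : ℕ) (hk : k < n) :
    0 ≤ gSub n b (k + 1) - gSub n b k := by
  rw [gSub_step]
  have hmem : k ∈ (Finset.range n).filter (fun j => k ≤ j) := by
    simp [Finset.mem_filter, Finset.mem_range, hk]
  have h1 : (1 : ℤ) ≤ ∑ j ∈ (Finset.range n).filter (fun j => k ≤ j), (b (n - 1 - j) : ℤ) := by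
    calc (1:ℤ) ≤ (b (n - 1 - k) : ℤ) := by
          exact_mod_cast hb (n - 1 - k) (by omega)
      _ ≤ _ := Finset.single_le_sum (f := fun j => (b (n - 1 - j) : ℤ)) (fun j _ => Int.natCast_nonneg _) hmem
  linarith

lemma gSub_mono (n : ℕ) (b : ℕ → ℕ) (hb : ∀ j < n, 1 ≤ b j) :
    ∀ m, m ≤ n → ∀ k, k ≤ m → gSub n b k ≤ gSub n b m := by
  intro m
  induction m with
  | zero =>
    intro _ k hk
    have : k = 0 := by omega
    rw [this]
  | succ m ih =>
    intro hm k hk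
    rcases Nat.lt_or_ge k (m+1) with h | h
    · have := ih (by omega) k (by omega)
      have h2 := gSub_step_nonneg n b hb m (by omega)
      linarith
    · have : k = m + 1 := by omega
      rw [this]

lemma gSub_step_anti (n : ℕ) (b : ℕ → ℕ) (k m : ℕ) (hkm : k ≤ m) :
    gSub n b (m + 1) - gSub n b m ≤ gSub n b (k + 1) - gSub n b k := by
  rw [gSub_step, gSub_step]
  have hsub : (Finset.range n).filter (fun j => m ≤ j) ⊆ (Finset.range n).filter (fun j => k ≤ j) := by
    intro j hj
    simp only [Finset.mem_filter] at *
    exact ⟨hj.1, le_trans hkm hj.2⟩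
  have := Finset.sum_le_sum_of_subset_of_nonneg hsub (fun j _ _ => Int.natCast_nonneg (b (n - 1 - j)))
  linarith

/-- `f_b` vanishes at `∅`, is nondecreasing, and is submodular:
for `X ⊆ Y ⊆ [n]` and `z ∈ [n] \ Y`,
`f_b(X ∪ {z}) - f_b(X) ≥ f_b(Y ∪ {z}) - f_b(Y)`. -/
theorem fSub_nondecreasing_submodular (n : ℕ) (b : ℕ → ℕ) (hb : ∀ j < n, 1 ≤ b j) :
    fSub n b ∅ = 0 ∧
    (∀ X Y : Finset (Fin n), X ⊆ Y → fSub n b X ≤ fSub n b Y) ∧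
    (∀ X Y : Finset (Fin n), X ⊆ Y → ∀ z : Fin n, z ∉ Y →
      fSub n b (Y ∪ {z}) - fSub n b Y ≤ fSub n b (X ∪ {z}) - fSub n b X) := by
  refine ⟨?_, ?_, ?_⟩
  · unfold fSub
    rw [Finset.sum_eq_zero (fun j _ => by
      have : ((Finset.card (∅ : Finset (Fin n)) : ℤ)) ⊓ ((j:ℤ)+1) = 0 := by
        simp; positivity
      rw [this]; ring)]
    simp
  · intro X Y hXY
    rw [fSub_eq_gSub, fSub_eq_gSub]
    have hYn : Y.card ≤ n := by
      simpa using Y.card_le_univ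
    exact gSub_mono n b hb Y.card hYn X.card (Finset.card_le_card hXY)
  · intro X Y hXY z hzY
    have hzX : z ∉ X := fun h => hzY (hXY h)
    have hcY : (Y ∪ {z}).card = Y.card + 1 := by
      rw [Finset.union_comm, ← Finset.insert_eq, Finset.card_insert_of_notMem hzY]
    have hcX : (X ∪ {z}).card = X.card + 1 := by
      rw [Finset.union_comm, ← Finset.insert_eq, Finset.card_insert_of_notMem hzX]
    rw [fSub_eq_gSub, fSub_eq_gSub, fSub_eq_gSub, fSub_eq_gSub, hcY, hcX]
    exact gSub_step_anti n b X.card Y.card (Finset.card_le_card hXY)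
end

section
/- In the signed Minkowski sum decomposition of the lifted b-parking-function polytope, the coefficient y_I for I ⊆ [n+1] with n+1 ∈ I and |I| ≥ 3 is given by y_I = ∑_{j=0}^{|I|-3} (-1)^{|I|+j-1} C(|I|-3, j) b_{j+2}; equivalently, for m = |I| ≥ 3, if z_J = |J| for n+1 ∉ J and z_J = S_1 + ... + S_{|J|-1} for n+1 ∈ J (with S_ℓ = b_1+...+b_ℓ, z_∅ = 0), then ∑_{J ⊆ I} (-1)^{|I|-|J|} z_J = (-1)^{m-1} ∑_{i=0}^{m-3} (-1)^i C(m-3,i) b_{i+2}. -/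
/-- The submodular parameters `z_J`: `z_J = |J|` if `n+1 ∉ J`, and
`z_J = S_1 + ⋯ + S_{|J|-1}` if `n+1 ∈ J` (with `z_∅ = 0`). -/
def zParam (n : ℕ) (b : ℕ → ℕ) (J : Finset (Fin (n + 1))) : ℤ :=
  if Fin.last n ∈ J then ∑ ℓ ∈ Finset.Icc 1 (J.card - 1), (Spart b ℓ : ℤ)
  else (J.card : ℤ)

namespace MKaux

open Finset

/-- Alternating binomial transform. -/
def E (f : ℕ → ℤ) (N : ℕ) : ℤ :=
  ∑ k ∈ Finset.range (N + 1), (-1 : ℤ) ^ k * (N.choose k : ℤ) * f k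

lemma E_congr {f g : ℕ → ℤ} (h : ∀ k, f k = g k) (N : ℕ) : E f N = E g N := by
  unfold E; exact Finset.sum_congr rfl fun k _ => by rw [h k]

lemma E_succ (f : ℕ → ℤ) (N : ℕ) :
    E f (N + 1) = E f N - E (fun k => f (k + 1)) N := by
  unfold E
  rw [Finset.sum_range_succ' (fun k => (-1 : ℤ) ^ k * ((N + 1).choose k : ℤ) * f k) (N + 1)]
  have hch : ∀ k, (((N + 1).choose (k + 1) : ℤ)) = (N.choose k : ℤ) + (N.choose (k + 1) : ℤ) := by
    intro k; exact_mod_cast (Nat.choose_succ_succ N k)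
  have h1 : ∀ k ∈ Finset.range (N + 1),
      (-1 : ℤ) ^ (k + 1) * ((N + 1).choose (k + 1) : ℤ) * f (k + 1)
        = (-((-1 : ℤ) ^ k * (N.choose k : ℤ) * f (k + 1)))
          + (-1 : ℤ) ^ (k + 1) * (N.choose (k + 1) : ℤ) * f (k + 1) := by
    intro k _; rw [hch k]; ring
  rw [Finset.sum_congr rfl h1, Finset.sum_add_distrib, Finset.sum_neg_distrib]
  have h2 : ∑ k ∈ Finset.range (N + 1), (-1 : ℤ) ^ (k + 1) * (N.choose (k + 1) : ℤ) * f (k + 1)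
      = ∑ k ∈ Finset.range N, (-1 : ℤ) ^ (k + 1) * (N.choose (k + 1) : ℤ) * f (k + 1) := by
    rw [Finset.sum_range_succ, Nat.choose_succ_self]; simp
  have h3 : ∑ k ∈ Finset.range (N + 1), (-1 : ℤ) ^ k * (N.choose k : ℤ) * f k
      = (∑ k ∈ Finset.range N, (-1 : ℤ) ^ (k + 1) * (N.choose (k + 1) : ℤ) * f (k + 1))
        + (-1 : ℤ) ^ 0 * (N.choose 0 : ℤ) * f 0 := by
    exact Finset.sum_range_succ' _ N
  rw [h2, h3]
  simp [Nat.choose_zero_right]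
  ring

lemma E_sub (f g : ℕ → ℤ) (N : ℕ) :
    E (fun k => f k - g k) N = E f N - E g N := by
  unfold E
  rw [← Finset.sum_sub_distrib]
  exact Finset.sum_congr rfl fun k _ => by ring

lemma E_diff (f : ℕ → ℤ) (N : ℕ) :
    E f (N + 1) = E (fun k => f k - f (k + 1)) N := by
  rw [E_sub, E_succ]

lemma E_one (N : ℕ) (hN : N ≠ 0) : E (fun _ => (1 : ℤ)) N = 0 := by
  unfold E
  simpa using Int.alternating_sum_range_choose_of_ne hN

lemma E_id (N : ℕ) (hN : 2 ≤ N) : E (fun k => (k : ℤ)) N = 0 := by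
  obtain ⟨M, rfl⟩ : ∃ M, N = M + 1 := ⟨N - 1, by omega⟩
  rw [E_diff]
  have : E (fun k => (k : ℤ) - ((k + 1 : ℕ) : ℤ)) M = E (fun _ => (-1 : ℤ)) M := by
    apply E_congr; intro k; push_cast; ring
  rw [this]
  have hM : M ≠ 0 := by omega
  have := E_one M hM
  unfold E at this ⊢
  calc ∑ k ∈ Finset.range (M + 1), (-1 : ℤ) ^ k * (M.choose k : ℤ) * (-1)
      = -∑ k ∈ Finset.range (M + 1), (-1 : ℤ) ^ k * (M.choose k : ℤ) * 1 := by
        rw [← Finset.sum_neg_distrib]; exact Finset.sum_congr rfl fun k _ => by ring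
    _ = 0 := by rw [this]; ring

/-- `T k = S_1 + ⋯ + S_k`. -/
def T (b : ℕ → ℕ) (k : ℕ) : ℤ := ∑ ℓ ∈ Finset.Icc 1 k, (Spart b ℓ : ℤ)

lemma T_succ (b : ℕ → ℕ) (k : ℕ) : T b (k + 1) = T b k + (Spart b (k + 1) : ℤ) := by
  unfold T
  rw [← Finset.Ico_add_one_right_eq_Icc, ← Finset.Ico_add_one_right_eq_Icc, Finset.sum_Ico_succ_top (by omega)]

lemma Spart_succ (b : ℕ → ℕ) (k : ℕ) : Spart b (k + 1) = Spart b k + b k := by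
  unfold Spart; rw [Finset.sum_range_succ]

lemma E_T (b : ℕ → ℕ) (M : ℕ) :
    E (T b) (M + 2) = E (fun k => (b (k + 1) : ℤ)) M := by
  rw [E_diff, E_diff]
  apply E_congr
  intro k
  have h1 := T_succ b k
  have h2 := T_succ b (k + 1)
  have h3 := Spart_succ b (k + 1)
  push_cast [h1, h2, h3]
  ring

end MKaux

/-- For `I ⊆ [n+1]` with `n+1 ∈ I` and `m = |I| ≥ 3`, the inclusion-exclusion
transform of the `z_J` is `y_I = (-1)^{m-1} ∑_{i=0}^{m-3} (-1)^i C(m-3,i) b_{i+2}`. -/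
theorem minkowski_coefficient (n : ℕ) (b : ℕ → ℕ) (I : Finset (Fin (n + 1)))
    (hI : Fin.last n ∈ I) (hcard : 3 ≤ I.card) :
    ∑ J ∈ I.powerset, (-1 : ℤ) ^ (I.card - J.card) * zParam n b J
      = (-1 : ℤ) ^ (I.card - 1) *
        ∑ i ∈ Finset.range (I.card - 2),
          (-1 : ℤ) ^ i * ((I.card - 3).choose i : ℤ) * (b (i + 1) : ℤ) := by
  classical
  open MKaux in
  set L := Fin.last n with hL
  set I' := I.erase L with hI'def
  have hLnot : L ∉ I' := Finset.notMem_erase _ _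
  have hins : insert L I' = I := Finset.insert_erase hI
  obtain ⟨M, hM⟩ : ∃ M, I.card = M + 3 := ⟨I.card - 3, by omega⟩
  have hcardI' : I'.card = M + 2 := by
    rw [hI'def, Finset.card_erase_of_mem hI, hM]
    omega
  rw [hM]
  -- split the powerset sum
  have hsplit : ∑ J ∈ I.powerset, (-1 : ℤ) ^ (M + 3 - J.card) * zParam n b J
      = (∑ J ∈ I'.powerset, (-1 : ℤ) ^ (M + 3 - J.card) * zParam n b J)
        + ∑ J ∈ I'.powerset, (-1 : ℤ) ^ (M + 3 - (insert L J).card) * zParam n b (insert L J) := by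
    conv_lhs => rw [← hins]
    exact Finset.sum_powerset_insert hLnot _
  rw [hsplit]
  -- first sum: J ⊆ I', so L ∉ J and zParam J = |J|
  have hz1 : ∀ J ∈ I'.powerset,
      (-1 : ℤ) ^ (M + 3 - J.card) * zParam n b J
        = (-1 : ℤ) ^ (M + 3 - J.card) * (J.card : ℤ) := by
    intro J hJ
    have hJsub : J ⊆ I' := Finset.mem_powerset.mp hJ
    have : L ∉ J := fun h => hLnot (hJsub h)
    rw [zParam, if_neg this]
  -- second sum: L ∈ insert L J, card = J.card + 1
  have hz2 : ∀ J ∈ I'.powerset,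
      (-1 : ℤ) ^ (M + 3 - (insert L J).card) * zParam n b (insert L J)
        = (-1 : ℤ) ^ (M + 3 - (J.card + 1)) * MKaux.T b J.card := by
    intro J hJ
    have hJsub : J ⊆ I' := Finset.mem_powerset.mp hJ
    have hLJ : L ∉ J := fun h => hLnot (hJsub h)
    have hc : (insert L J).card = J.card + 1 := Finset.card_insert_of_notMem hLJ
    rw [zParam, if_pos (Finset.mem_insert_self _ _), hc]
    simp [MKaux.T]
  rw [Finset.sum_congr rfl hz1, Finset.sum_congr rfl hz2]
  -- convert both sums to sums over cardinalities
  have hs1 : ∑ J ∈ I'.powerset, (-1 : ℤ) ^ (M + 3 - J.card) * (J.card : ℤ)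
      = ∑ k ∈ Finset.range (M + 3), ((M + 2).choose k : ℤ) * ((-1 : ℤ) ^ (M + 3 - k) * (k : ℤ)) := by
    rw [Finset.sum_powerset_apply_card (fun k => (-1 : ℤ) ^ (M + 3 - k) * (k : ℤ))]
    rw [hcardI']
    exact Finset.sum_congr rfl fun k _ => by rw [nsmul_eq_mul]
  have hs2 : ∑ J ∈ I'.powerset, (-1 : ℤ) ^ (M + 3 - (J.card + 1)) * MKaux.T b J.card
      = ∑ k ∈ Finset.range (M + 3), ((M + 2).choose k : ℤ) * ((-1 : ℤ) ^ (M + 3 - (k + 1)) * MKaux.T b k) := by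
    rw [Finset.sum_powerset_apply_card (fun k => (-1 : ℤ) ^ (M + 3 - (k + 1)) * MKaux.T b k)]
    rw [hcardI']
    exact Finset.sum_congr rfl fun k _ => by rw [nsmul_eq_mul]
  rw [hs1, hs2]
  -- now pure arithmetic
  have e1 : ∑ k ∈ Finset.range (M + 3), ((M + 2).choose k : ℤ) * ((-1 : ℤ) ^ (M + 3 - k) * (k : ℤ))
      = -((-1 : ℤ) ^ (M + 2) * MKaux.E (fun k => (k : ℤ)) (M + 2)) := by
    unfold MKaux.E
    rw [Finset.mul_sum, ← Finset.sum_neg_distrib]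
    apply Finset.sum_congr rfl
    intro k hk
    have hk' : k ≤ M + 2 := by
      have := Finset.mem_range.mp hk; omega
    have hpow : (-1 : ℤ) ^ (M + 3 - k) = -((-1 : ℤ) ^ (M + 2) * (-1 : ℤ) ^ k) := by
      have h1 : (-1 : ℤ) ^ (M + 3 - k) * (-1 : ℤ) ^ k = (-1 : ℤ) ^ (M + 3) := by
        rw [← pow_add]; congr 1; omega
      have h2 : ((-1 : ℤ) ^ k) * ((-1 : ℤ) ^ k) = 1 := by
        rw [← pow_add, Even.neg_one_pow ⟨k, by ring⟩]
      calc (-1 : ℤ) ^ (M + 3 - k) = (-1 : ℤ) ^ (M + 3 - k) * (((-1 : ℤ) ^ k) * ((-1 : ℤ) ^ k)) := by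
            rw [h2, mul_one]
        _ = (-1 : ℤ) ^ (M + 3) * (-1 : ℤ) ^ k := by rw [← mul_assoc, h1]
        _ = -((-1 : ℤ) ^ (M + 2) * (-1 : ℤ) ^ k) := by rw [pow_succ]; ring
    rw [hpow]; ring
  have e2 : ∑ k ∈ Finset.range (M + 3), ((M + 2).choose k : ℤ) * ((-1 : ℤ) ^ (M + 3 - (k + 1)) * MKaux.T b k)
      = (-1 : ℤ) ^ (M + 2) * MKaux.E (MKaux.T b) (M + 2) := by
    unfold MKaux.E
    rw [Finset.mul_sum]
    apply Finset.sum_congr rfl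
    intro k hk
    have hk' : k ≤ M + 2 := by
      have := Finset.mem_range.mp hk; omega
    have hpow : (-1 : ℤ) ^ (M + 3 - (k + 1)) = (-1 : ℤ) ^ (M + 2) * (-1 : ℤ) ^ k := by
      have h1 : (-1 : ℤ) ^ (M + 3 - (k + 1)) * (-1 : ℤ) ^ k = (-1 : ℤ) ^ (M + 2) := by
        rw [← pow_add]; congr 1; omega
      have h2 : ((-1 : ℤ) ^ k) * ((-1 : ℤ) ^ k) = 1 := by
        rw [← pow_add, Even.neg_one_pow ⟨k, by ring⟩]
      calc (-1 : ℤ) ^ (M + 3 - (k + 1))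
          = (-1 : ℤ) ^ (M + 3 - (k + 1)) * (((-1 : ℤ) ^ k) * ((-1 : ℤ) ^ k)) := by
            rw [h2, mul_one]
        _ = (-1 : ℤ) ^ (M + 2) * (-1 : ℤ) ^ k := by rw [← mul_assoc, h1]
    rw [hpow]; ring
  rw [e1, e2, MKaux.E_id (M + 2) (by omega), MKaux.E_T b M]
  have hexp : M + 3 - 1 = M + 2 := by omega
  have hexp2 : M + 3 - 2 = M + 1 := by omega
  have hexp3 : M + 3 - 3 = M := by omega
  rw [hexp, hexp2, hexp3]
  unfold MKaux.E
  ring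
end

section
/- The lifted b-parking-function polytope X̄_n(b) = { (x_1,...,x_n, B - ∑x_i) : x ∈ X_n(b) }, where B = ∑_{k=1}^n S_k, is a generalized permutahedron: all of its edges are parallel to differences e_i - e_j of standard basis vectors of ℝ^{n+1}. -/
/-- The `b`-parking-function polytope. -/
noncomputable def bpfPolytope (n : ℕ) (b : ℕ → ℕ) : Set (Fin n → ℝ) :=
  convexHull ℝ {x | ∃ β : Fin n → ℕ, IsBParkingFunction n b β ∧ x = fun i => (β i : ℝ)}

/-- The lifted `b`-parking-function polytope
`X̄_n(b) = {(x, B - ∑ xᵢ) : x ∈ X_n(b)}` with `B = ∑_{k=1}^n S_k`. -/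
noncomputable def liftedPolytope (n : ℕ) (b : ℕ → ℕ) : Set (Fin (n + 1) → ℝ) :=
  (fun x : Fin n → ℝ =>
    Fin.snoc x ((∑ k ∈ Finset.Icc 1 n, (Spart b k : ℝ)) - ∑ i, x i)) '' bpfPolytope n b

namespace PFAux

open Finset

variable {n : ℕ} {b : ℕ → ℕ}

def good (n : ℕ) (b : ℕ → ℕ) (β : Fin n → ℕ) : Prop :=
  (∀ i, 1 ≤ β i) ∧ ∀ t, 1 ≤ t → t ≤ n →
    t ≤ (Finset.univ.filter fun k => β k ≤ Spart b t).card

lemma Spart_mono : Monotone (Spart b) := fun s t hst =>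
  Finset.sum_le_sum_of_subset (Finset.range_subset_range.2 hst)

lemma card_filter_val_lt (t : ℕ) (ht : t ≤ n) :
    (Finset.univ.filter fun k : Fin n => (k : ℕ) < t).card = t := by
  have : (Finset.univ.filter fun k : Fin n => (k : ℕ) < t).card = (Finset.range t).card := by
    refine Finset.card_bij (fun k _ => (k : ℕ)) ?_ ?_ ?_
    · intro a ha; simp only [Finset.mem_filter] at ha; simpa using ha.2
    · intro a ha b hb hab; exact Fin.val_injective hab
    · intro m hm
      simp only [Finset.mem_range] at hm
      exact ⟨⟨m, lt_of_lt_of_le hm ht⟩, by simpa using hm, rfl⟩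
  rwa [Finset.card_range] at this

lemma parking_iff_good (β : Fin n → ℕ) :
    IsBParkingFunction n b β ↔ good n b β := by
  constructor
  · rintro ⟨h1, σ, hmono, hbd⟩
    refine ⟨h1, fun t ht htn => ?_⟩
    have hsub : (Finset.univ.filter fun k : Fin n => (k : ℕ) < t).image σ ⊆
        Finset.univ.filter fun k => β k ≤ Spart b t := by
      intro k hk
      simp only [Finset.mem_image, Finset.mem_filter, Finset.mem_univ, true_and] at hk ⊢
      obtain ⟨m, hm, rfl⟩ := hk
      exact le_trans (hbd m) (Spart_mono hm)
    have := Finset.card_le_card hsub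
    rwa [Finset.card_image_of_injective _ σ.injective, card_filter_val_lt t htn] at this
  · rintro ⟨h1, h2⟩
    refine ⟨h1, Tuple.sort β, Tuple.monotone_sort β, fun i => ?_⟩
    by_contra hlt
    push_neg at hlt
    have hsub : (Finset.univ.filter fun k => β k ≤ Spart b ((i : ℕ) + 1)) ⊆
        (Finset.univ.filter fun k : Fin n => (k : ℕ) < (i : ℕ)).image (Tuple.sort β) := by
      intro k hk
      simp only [Finset.mem_filter, Finset.mem_univ, true_and] at hk
      simp only [Finset.mem_image, Finset.mem_filter, Finset.mem_univ, true_and]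
      refine ⟨(Tuple.sort β).symm k, ?_, by simp⟩
      by_contra hge
      push_neg at hge
      have : β (Tuple.sort β i) ≤ β (Tuple.sort β ((Tuple.sort β).symm k)) :=
        Tuple.monotone_sort β (by exact_mod_cast hge)
      simp only [Equiv.apply_symm_apply] at this
      omega
    have hc := Finset.card_le_card hsub
    rw [Finset.card_image_of_injective _ (Tuple.sort β).injective,
      card_filter_val_lt (i : ℕ) (le_of_lt i.isLt)] at hc
    have := h2 ((i : ℕ) + 1) (Nat.succ_le_succ (Nat.zero_le _)) (Nat.succ_le_of_lt i.isLt)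
    omega

lemma parking_perm {β : Fin n → ℕ} (h : IsBParkingFunction n b β) (τ : Equiv.Perm (Fin n)) :
    IsBParkingFunction n b (β ∘ τ) := by
  obtain ⟨h1, σ, hmono, hbd⟩ := h
  refine ⟨fun i => h1 (τ i), σ.trans τ.symm, ?_, fun i => by simp [Spart]; simpa [Spart] using hbd i⟩
  have : (β ∘ τ) ∘ (σ.trans τ.symm) = β ∘ σ := by ext k; simp
  rw [this]; exact hmono

lemma parking_decr {β : Fin n → ℕ} (h : IsBParkingFunction n b β) {i : Fin n}
    (h2 : 2 ≤ β i) :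
    IsBParkingFunction n b (Function.update β i (β i - 1)) := by
  rw [parking_iff_good] at h ⊢
  obtain ⟨h1, hc⟩ := h
  constructor
  · intro k
    rcases eq_or_ne k i with rfl | hk
    · simp; omega
    · simp [Function.update_of_ne hk]; exact h1 k
  · intro t ht htn
    refine le_trans (hc t ht htn) (Finset.card_le_card ?_)
    intro k hk
    simp only [Finset.mem_filter, Finset.mem_univ, true_and] at hk ⊢
    rcases eq_or_ne k i with rfl | hkk
    · simp; omega
    · rwa [Function.update_of_ne hkk]

lemma tight_of_not_incr {β : Fin n → ℕ} (h : IsBParkingFunction n b β) {i : Fin n}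
    (h2 : ¬ IsBParkingFunction n b (Function.update β i (β i + 1))) :
    ∃ t, 1 ≤ t ∧ t ≤ n ∧ Spart b t = β i ∧
      (Finset.univ.filter fun k => β k ≤ Spart b t).card ≤ t := by
  rw [parking_iff_good] at h h2
  obtain ⟨h1, hc⟩ := h
  rw [good, not_and_or] at h2
  rcases h2 with h2 | h2
  · exfalso; apply h2; intro k
    rcases eq_or_ne k i with rfl | hk
    · simp
    · simp only [Function.update_of_ne hk]; exact h1 k
  · push_neg at h2
    obtain ⟨t, ht, htn, hcard⟩ := h2
    refine ⟨t, ht, htn, ?_, ?_⟩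
    · -- S_t = β i
      by_contra hne
      apply absurd hcard
      push_neg
      refine le_trans (hc t ht htn) (Finset.card_le_card ?_)
      intro k hk
      simp only [Finset.mem_filter, Finset.mem_univ, true_and] at hk ⊢
      rcases eq_or_ne k i with rfl | hkk
      · simp only [Function.update_self] at hk ⊢
        omega
      · rwa [Function.update_of_ne hkk]
    · -- card ≤ t
      have hsub : (Finset.univ.filter fun k => β k ≤ Spart b t) ⊆
          insert i (Finset.univ.filter fun k => Function.update β i (β i + 1) k ≤ Spart b t) := by
        intro k hk
        simp only [Finset.mem_filter, Finset.mem_univ, true_and] at hk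
        rcases eq_or_ne k i with rfl | hkk
        · exact Finset.mem_insert_self _ _
        · refine Finset.mem_insert_of_mem ?_
          simp only [Finset.mem_filter, Finset.mem_univ, true_and]
          rwa [Function.update_of_ne hkk]
      have := Finset.card_le_card hsub
      have := Finset.card_insert_le i (Finset.univ.filter fun k => Function.update β i (β i + 1) k ≤ Spart b t)
      omega


lemma good_count {n : ℕ} {b : ℕ → ℕ} {β : Fin n → ℕ} (h : IsBParkingFunction n b β)
    {t : ℕ} (ht : 1 ≤ t) (htn : t ≤ n) :
    t ≤ (Finset.univ.filter fun k => β k ≤ Spart b t).card :=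
  ((parking_iff_good β).1 h).2 t ht htn
open Finset

variable {n : ℕ}

/-- the lifting map as a plain function -/
def lf (n : ℕ) (C : ℝ) (x : Fin n → ℝ) : Fin (n+1) → ℝ :=
  Fin.snoc x (C - ∑ i, x i)

noncomputable def lfAff (n : ℕ) (C : ℝ) : (Fin n → ℝ) →ᵃ[ℝ] (Fin (n+1) → ℝ) where
  toFun := lf n C
  linear :=
  { toFun := fun x => Fin.snoc x (- ∑ i, x i)
    map_add' := fun x y => by
      funext k
      refine Fin.lastCases ?_ (fun k => ?_) k
      · simp [Fin.snoc_last, Finset.sum_add_distrib]; ring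
      · simp [Fin.snoc_castSucc]
    map_smul' := fun c x => by
      funext k
      refine Fin.lastCases ?_ (fun k => ?_) k
      · simp [Fin.snoc_last, Finset.mul_sum]
      · simp [Fin.snoc_castSucc] }
  map_vadd' := by
    intro p v
    funext k
    refine Fin.lastCases ?_ (fun k => ?_) k
    · simp [lf, Fin.snoc_last, Finset.sum_add_distrib]; ring
    · simp [lf, Fin.snoc_castSucc]

lemma lfAff_coe (n : ℕ) (C : ℝ) : ⇑(lfAff n C) = lf n C := rfl

lemma lf_add (C : ℝ) (x u : Fin n → ℝ) :
    lf n C (x + u) = lf n C x + Fin.snoc u (- ∑ k, u k) := by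
  funext k
  refine Fin.lastCases ?_ (fun k => ?_) k
  · simp [lf, Fin.snoc_last, Finset.sum_add_distrib]; ring
  · simp [lf, Fin.snoc_castSucc]

lemma sum_lf (C : ℝ) (x : Fin n → ℝ) : ∑ k, lf n C x k = C := by
  rw [Fin.sum_univ_castSucc]
  simp [lf, Fin.snoc_castSucc, Fin.snoc_last]

lemma snoc_single (i : Fin n) (c : ℝ) :
    (Fin.snoc (Pi.single i c) (-c) : Fin (n+1) → ℝ)
      = c • (Pi.single i.castSucc (1:ℝ) - Pi.single (Fin.last n) 1) := by
  funext k
  refine Fin.lastCases ?_ (fun k => ?_) k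
  · simp [Fin.snoc_last, Pi.single_eq_of_ne (Fin.castSucc_lt_last i).ne']
  · rcases eq_or_ne k i with rfl | hk
    · simp [Fin.snoc_castSucc, Pi.single_eq_of_ne (Fin.castSucc_lt_last k).ne]
    · simp [Fin.snoc_castSucc, Pi.single_eq_of_ne hk,
        Pi.single_eq_of_ne (fun h => hk (Fin.castSucc_injective n h)),
        Pi.single_eq_of_ne (Fin.castSucc_lt_last k).ne]

lemma snoc_single_sub (i j : Fin n) (c : ℝ) :
    (Fin.snoc (c • (Pi.single i (1:ℝ) - Pi.single j 1)) 0 : Fin (n+1) → ℝ)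
      = c • (Pi.single i.castSucc (1:ℝ) - Pi.single j.castSucc 1) := by
  funext k
  refine Fin.lastCases ?_ (fun k => ?_) k
  · simp [Fin.snoc_last, Pi.single_eq_of_ne (Fin.castSucc_lt_last i).ne',
      Pi.single_eq_of_ne (Fin.castSucc_lt_last j).ne']
  · have hci : (Pi.single i.castSucc (1:ℝ) : Fin (n+1) → ℝ) k.castSucc = (Pi.single i (1:ℝ) : Fin n → ℝ) k := by
      rcases eq_or_ne k i with rfl | hk
      · simp
      · simp [Pi.single_eq_of_ne hk, Pi.single_eq_of_ne (fun h => hk (Fin.castSucc_injective n h))]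
    have hcj : (Pi.single j.castSucc (1:ℝ) : Fin (n+1) → ℝ) k.castSucc = (Pi.single j (1:ℝ) : Fin n → ℝ) k := by
      rcases eq_or_ne k j with rfl | hk
      · simp
      · simp [Pi.single_eq_of_ne hk, Pi.single_eq_of_ne (fun h => hk (Fin.castSucc_injective n h))]
    simp [Fin.snoc_castSucc, hci, hcj]

lemma lf_update (C : ℝ) (x : Fin n → ℝ) (i : Fin n) (c : ℝ) :
    lf n C (Function.update x i (x i + c))
      = lf n C x + c • (Pi.single i.castSucc (1:ℝ) - Pi.single (Fin.last n) 1) := by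
  have h : Function.update x i (x i + c) = x + Pi.single i c := by
    funext k
    rcases eq_or_ne k i with rfl | hk
    · simp
    · simp [Function.update_of_ne hk, Pi.single_eq_of_ne hk]
  rw [h, lf_add, ← snoc_single]
  congr 1
  simp

lemma seg_contra {n : ℕ} {v w : Fin (n+1) → ℝ}
    (hbig : ∀ i j : Fin (n+1), ∃ k, k ≠ i ∧ k ≠ j ∧ w k - v k ≠ 0)
    {p q : Fin (n+1)} (hpq : p ≠ q) {c : ℝ} (hc : c ≠ 0) {z : Fin (n+1) → ℝ}
    (hz : z = v ∨ z = w)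
    (hm : z + c • (Pi.single p (1:ℝ) - Pi.single q 1) ∈ segment ℝ v w) : False := by
  rw [segment_eq_image'] at hm
  obtain ⟨θ, hθ, heq⟩ := hm
  obtain ⟨k, hkp, hkq, hk⟩ := hbig p q
  have hkk := congrFun heq k
  have hpp := congrFun heq p
  simp only [Pi.add_apply, Pi.smul_apply, Pi.sub_apply, smul_eq_mul] at hkk hpp
  rw [Pi.single_eq_of_ne hkp, Pi.single_eq_of_ne hkq] at hkk
  rw [Pi.single_eq_same, Pi.single_eq_of_ne hpq] at hpp
  rcases hz with rfl | rfl
  · have h0 : θ * (w k - z k) = 0 := by linear_combination hkk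
    rcases mul_eq_zero.1 h0 with h | h
    · rw [h] at hpp
      apply hc
      linarith
    · exact hk h
  · have h0 : (θ - 1) * (z k - v k) = 0 := by linear_combination hkk
    rcases mul_eq_zero.1 h0 with h | h
    · have hθ1 : θ = 1 := by linarith
      rw [hθ1] at hpp
      apply hc
      linarith
    · exact hk h

lemma core {n : ℕ} {b : ℕ → ℕ} {C : ℝ} {A : Set (Fin (n+1) → ℝ)}
    {l : (Fin (n+1) → ℝ) →L[ℝ] ℝ} {β γ : Fin n → ℕ}
    (hβ : IsBParkingFunction n b β) (hγ : IsBParkingFunction n b γ)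
    {v w : Fin (n+1) → ℝ}
    (hv : v = lf n C (fun k => (β k : ℝ))) (hw : w = lf n C (fun k => (γ k : ℝ)))
    (hmemA : ∀ δ : Fin n → ℕ, IsBParkingFunction n b δ → lf n C (fun k => (δ k : ℝ)) ∈ A)
    (hmax : ∀ y ∈ A, l y ≤ l v)
    (hlw : l w = l v)
    (hseg : ∀ y ∈ A, l v ≤ l y → y ∈ segment ℝ v w)
    (hbig : ∀ i j : Fin (n+1), ∃ k, k ≠ i ∧ k ≠ j ∧ w k - v k ≠ 0)
    {i₀ : Fin n} (hlt : β i₀ < γ i₀) : False := by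
  have hβ1 := hβ.1
  have hγ1 := hγ.1
  have hγ2 : 2 ≤ γ i₀ := by have := hβ1 i₀; omega
  set u : Fin (n+1) → ℝ := Pi.single i₀.castSucc (1:ℝ) - Pi.single (Fin.last n) 1 with hu
  have hine : i₀.castSucc ≠ Fin.last n := (Fin.castSucc_lt_last i₀).ne
  -- decrement move at γ
  have hδ₁ : IsBParkingFunction n b (Function.update γ i₀ (γ i₀ - 1)) := parking_decr hγ hγ2
  have hfun₁ : (fun k => ((Function.update γ i₀ (γ i₀ - 1)) k : ℝ))
      = Function.update (fun k => (γ k : ℝ)) i₀ ((fun k => (γ k : ℝ)) i₀ + (-1)) := by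
    funext k
    simp only [Function.update_apply]
    split_ifs with h
    · subst h
      have : (1:ℕ) ≤ γ k := hγ1 k
      push_cast [Nat.cast_sub this]
      ring
    · rfl
  have hm₁ : lf n C (fun k => ((Function.update γ i₀ (γ i₀ - 1)) k : ℝ)) = w + (-1 : ℝ) • u := by
    rw [hfun₁, lf_update, hw, hu]
  have hlu_nonneg : 0 ≤ l u := by
    have := hmax _ (hmemA _ hδ₁)
    rw [hm₁] at this
    simp only [map_add, map_smul, smul_eq_mul] at this
    rw [hlw] at this
    linarith
  have hlu_ne : l u ≠ 0 → True := fun _ => trivial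
  -- if l u = 0 then decrement move is on segment: contra
  have hlu_pos_aux : l u = 0 → False := by
    intro h0
    refine seg_contra hbig hine (c := (-1:ℝ)) (by norm_num) (Or.inr rfl) ?_
    rw [← hm₁]
    apply hseg _ (hmemA _ hδ₁)
    rw [hm₁]
    simp only [map_add, map_smul, smul_eq_mul, h0, hlw]
    linarith
  -- increment move at β is not parking
  have hδ₂ : ¬ IsBParkingFunction n b (Function.update β i₀ (β i₀ + 1)) := by
    intro hpk
    have hfun₂ : (fun k => ((Function.update β i₀ (β i₀ + 1)) k : ℝ))
        = Function.update (fun k => (β k : ℝ)) i₀ ((fun k => (β k : ℝ)) i₀ + (1:ℝ)) := by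
      funext k
      simp only [Function.update_apply]
      split_ifs with h
      · subst h; push_cast; ring
      · rfl
    have hm₂ : lf n C (fun k => ((Function.update β i₀ (β i₀ + 1)) k : ℝ)) = v + (1 : ℝ) • u := by
      rw [hfun₂, lf_update, hv, hu]
    have := hmax _ (hmemA _ hpk)
    rw [hm₂] at this
    simp only [map_add, map_smul, smul_eq_mul] at this
    have hlu0 : l u = 0 := le_antisymm (by linarith) hlu_nonneg
    exact hlu_pos_aux hlu0
  -- tightness
  obtain ⟨t, ht, htn, hSt, hcard⟩ := tight_of_not_incr hβ hδ₂
  have hγcard := good_count hγ ht htn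
  -- find j₀
  have hiβ : i₀ ∈ Finset.univ.filter fun k => β k ≤ Spart b t := by
    simp only [Finset.mem_filter, Finset.mem_univ, true_and, hSt, le_refl]
  have hiγ : i₀ ∉ Finset.univ.filter fun k => γ k ≤ Spart b t := by
    simp only [Finset.mem_filter, Finset.mem_univ, true_and, hSt]
    omega
  have hj : ∃ j₀, γ j₀ ≤ Spart b t ∧ ¬ (β j₀ ≤ Spart b t) := by
    by_contra hsub
    push_neg at hsub
    have hss : (Finset.univ.filter fun k => γ k ≤ Spart b t) ⊆
        (Finset.univ.filter fun k => β k ≤ Spart b t).erase i₀ := by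
      intro k hk
      simp only [Finset.mem_filter, Finset.mem_univ, true_and] at hk
      refine Finset.mem_erase.2 ⟨?_, by simp [hsub k hk]⟩
      rintro rfl
      exact hiγ (by simp [hk])
    have h1 := Finset.card_le_card hss
    have h2 := Finset.card_erase_of_mem hiβ
    omega
  obtain ⟨j₀, hγj, hβj⟩ := hj
  push_neg at hβj
  have hij : i₀ ≠ j₀ := by
    rintro rfl; omega
  set s : Fin (n+1) → ℝ := Pi.single i₀.castSucc (1:ℝ) - Pi.single j₀.castSucc 1 with hs
  have hijc : i₀.castSucc ≠ j₀.castSucc := fun h => hij (Fin.castSucc_injective n h)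
  -- swap computation
  have hswap : ∀ δ : Fin n → ℕ,
      (fun k => ((δ ∘ (Equiv.swap i₀ j₀)) k : ℝ))
        = (fun k => (δ k : ℝ)) + ((δ j₀ : ℝ) - δ i₀) • (Pi.single i₀ (1:ℝ) - Pi.single j₀ 1) := by
    intro δ
    funext k
    simp only [Function.comp_apply, Pi.add_apply, Pi.smul_apply, Pi.sub_apply, smul_eq_mul]
    rcases eq_or_ne k i₀ with rfl | hki
    · rw [Equiv.swap_apply_left, Pi.single_eq_same, Pi.single_eq_of_ne hij]
      ring
    rcases eq_or_ne k j₀ with rfl | hkj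
    · rw [Equiv.swap_apply_right, Pi.single_eq_same, Pi.single_eq_of_ne (Ne.symm hij)]
      ring
    · rw [Equiv.swap_apply_of_ne_of_ne hki hkj, Pi.single_eq_of_ne hki, Pi.single_eq_of_ne hkj]
      ring
  have hsum0 : ∀ c : ℝ, ∑ k, ((c • ((Pi.single i₀ (1:ℝ) : Fin n → ℝ) - Pi.single j₀ 1) : Fin n → ℝ)) k = 0 := by
    intro c
    simp only [Pi.smul_apply, Pi.sub_apply, smul_eq_mul]
    rw [← Finset.mul_sum, Finset.sum_sub_distrib, Finset.sum_pi_single', Finset.sum_pi_single']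
    simp
  have hlfswap : ∀ (δ : Fin n → ℕ),
      lf n C (fun k => ((δ ∘ (Equiv.swap i₀ j₀)) k : ℝ))
        = lf n C (fun k => (δ k : ℝ)) + ((δ j₀ : ℝ) - δ i₀) • s := by
    intro δ
    rw [hswap, lf_add, hsum0, neg_zero, snoc_single_sub, hs]
  -- swap on β
  have hswβ := hmax _ (hmemA _ (parking_perm hβ (Equiv.swap i₀ j₀)))
  rw [hlfswap, ← hv] at hswβ
  simp only [map_add, map_smul, smul_eq_mul] at hswβ
  have hc₃ : (0:ℝ) < (β j₀ : ℝ) - β i₀ := by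
    have h1 : β i₀ < β j₀ := by omega
    have h2 : (β i₀ : ℝ) < β j₀ := by exact_mod_cast h1
    linarith
  have hls_le : l s ≤ 0 := by
    by_contra hpos
    push_neg at hpos
    nlinarith
  -- swap on γ
  have hswγ := hmax _ (hmemA _ (parking_perm hγ (Equiv.swap i₀ j₀)))
  rw [hlfswap, ← hw] at hswγ
  simp only [map_add, map_smul, smul_eq_mul] at hswγ
  rw [hlw] at hswγ
  have hc₄ : (γ j₀ : ℝ) - γ i₀ < 0 := by
    have h1 : γ j₀ < γ i₀ := by omega
    have h2 : (γ j₀ : ℝ) < γ i₀ := by exact_mod_cast h1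
    linarith
  have hls_ge : 0 ≤ l s := by
    by_contra hneg
    push_neg at hneg
    nlinarith
  have hls0 : l s = 0 := le_antisymm hls_le hls_ge
  -- then β-swap point is on segment: contra
  have hfin : lf n C (fun k => ((β ∘ (Equiv.swap i₀ j₀)) k : ℝ)) ∈ segment ℝ v w := by
    apply hseg _ (hmemA _ (parking_perm hβ (Equiv.swap i₀ j₀)))
    rw [hlfswap, ← hv]
    simp only [map_add, map_smul, smul_eq_mul, hls0]
    linarith
  have heq3 : lf n C (fun k => ((β ∘ (Equiv.swap i₀ j₀)) k : ℝ))
      = v + ((β j₀ : ℝ) - β i₀) •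
        ((Pi.single i₀.castSucc (1:ℝ) : Fin (n+1) → ℝ) - Pi.single j₀.castSucc 1) := by
    rw [hlfswap, ← hv, hs]
  exact seg_contra hbig hijc (ne_of_gt hc₃) (Or.inl rfl) (heq3 ▸ hfin)

end PFAux

/-- The lifted `b`-parking-function polytope is a generalized permutahedron:
every edge is parallel to `e_i - e_j` for some `i ≠ j`. -/
theorem lifted_is_generalized_permutahedron (n : ℕ) (b : ℕ → ℕ)
    (hb : ∀ j < n, 1 ≤ b j) :
    ∀ v w : Fin (n + 1) → ℝ,
      v ∈ Set.extremePoints ℝ (liftedPolytope n b) →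
      w ∈ Set.extremePoints ℝ (liftedPolytope n b) →
      v ≠ w → IsExposed ℝ (liftedPolytope n b) (segment ℝ v w) →
      ∃ i j : Fin (n + 1), i ≠ j ∧ ∃ c : ℝ,
        w - v = c • ((Pi.single i (1 : ℝ) : Fin (n + 1) → ℝ)
          - (Pi.single j (1 : ℝ) : Fin (n + 1) → ℝ)) := by
  intro v w hv hw hvw hexp
  classical
  set C : ℝ := ∑ k ∈ Finset.Icc 1 n, (Spart b k : ℝ) with hC
  set S₀ : Set (Fin n → ℝ) :=
    {x | ∃ β : Fin n → ℕ, IsBParkingFunction n b β ∧ x = fun i => (β i : ℝ)} with hS₀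
  have hPoly : liftedPolytope n b = convexHull ℝ (PFAux.lf n C '' S₀) := by
    rw [liftedPolytope, bpfPolytope]
    have : (fun x : Fin n → ℝ =>
        Fin.snoc x ((∑ k ∈ Finset.Icc 1 n, (Spart b k : ℝ)) - ∑ i, x i)) = PFAux.lf n C := rfl
    rw [this, ← PFAux.lfAff_coe n C, AffineMap.image_convexHull]
  -- representatives
  have hv' : v ∈ PFAux.lf n C '' S₀ := by
    rw [hPoly] at hv
    exact extremePoints_convexHull_subset hv
  have hw' : w ∈ PFAux.lf n C '' S₀ := by
    rw [hPoly] at hw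
    exact extremePoints_convexHull_subset hw
  obtain ⟨xv, ⟨β, hβ, rfl⟩, hveq⟩ := hv'
  obtain ⟨xw, ⟨γ, hγ, rfl⟩, hweq⟩ := hw'
  -- exposed functional
  obtain ⟨l, hl⟩ := hexp ⟨v, left_mem_segment ℝ v w⟩
  have hvseg := left_mem_segment ℝ v w
  have hwseg := right_mem_segment ℝ v w
  rw [hl] at hvseg hwseg
  obtain ⟨hvA, hmaxv⟩ := hvseg
  obtain ⟨hwA, hmaxw⟩ := hwseg
  have hlw : l w = l v := le_antisymm (hmaxv w hwA) (hmaxw v hvA)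
  have hseg : ∀ y ∈ liftedPolytope n b, l v ≤ l y → y ∈ segment ℝ v w := by
    intro y hy hly
    rw [hl]
    exact ⟨hy, fun z hz => le_trans (hmaxv z hz) hly⟩
  have hmemA : ∀ δ : Fin n → ℕ, IsBParkingFunction n b δ →
      PFAux.lf n C (fun k => (δ k : ℝ)) ∈ liftedPolytope n b := by
    intro δ hδ
    rw [hPoly]
    exact subset_convexHull ℝ _ ⟨_, ⟨δ, hδ, rfl⟩, rfl⟩
  -- sums
  have hsv : ∑ k, v k = C := by rw [← hveq]; exact PFAux.sum_lf C _
  have hsw : ∑ k, w k = C := by rw [← hweq]; exact PFAux.sum_lf C _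
  have hsum : ∑ k, (w k - v k) = 0 := by
    rw [Finset.sum_sub_distrib, hsv, hsw, sub_self]
  by_contra hcon
  push_neg at hcon
  have hbig : ∀ i j : Fin (n+1), ∃ k, k ≠ i ∧ k ≠ j ∧ w k - v k ≠ 0 := by
    intro i j
    by_contra hno
    push_neg at hno
    rcases eq_or_ne i j with rfl | hij
    · apply hvw
      have hdi : w i - v i = 0 := by
        have h2 : ∑ k, (w k - v k) = w i - v i := by
          rw [Finset.sum_eq_single i]
          · intro k _ hk; exact hno k hk hk
          · intro h; exact absurd (Finset.mem_univ i) h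
        linarith
      funext k
      rcases eq_or_ne k i with rfl | hk
      · linarith
      · have := hno k hk hk; linarith
    · apply hcon i j hij (w i - v i)
      have hdj : w j - v j = -(w i - v i) := by
        have h2 : ∑ k ∈ ({i, j} : Finset (Fin (n+1))), (w k - v k) = ∑ k, (w k - v k) := by
          refine Finset.sum_subset (Finset.subset_univ _) ?_
          intro k _ hk
          simp only [Finset.mem_insert, Finset.mem_singleton] at hk
          push_neg at hk
          exact hno k hk.1 hk.2
        rw [Finset.sum_pair hij] at h2
        linarith
      funext k
      simp only [Pi.sub_apply, Pi.smul_apply, smul_eq_mul]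
      rcases eq_or_ne k i with rfl | hki
      · rw [Pi.single_eq_same, Pi.single_eq_of_ne hij]; ring
      rcases eq_or_ne k j with rfl | hkj
      · rw [Pi.single_eq_same, Pi.single_eq_of_ne (Ne.symm hij), hdj]; ring
      · rw [Pi.single_eq_of_ne hki, Pi.single_eq_of_ne hkj, hno k hki hkj]; ring
  obtain ⟨k0, hk0ne, _, hk0⟩ := hbig (Fin.last n) (Fin.last n)
  obtain ⟨i₀, rfl⟩ := Fin.exists_castSucc_eq.2 hk0ne
  have hvcs : v i₀.castSucc = (β i₀ : ℝ) := by
    rw [← hveq]; exact Fin.snoc_castSucc _ _ _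
  have hwcs : w i₀.castSucc = (γ i₀ : ℝ) := by
    rw [← hweq]; exact Fin.snoc_castSucc _ _ _
  have hne : β i₀ ≠ γ i₀ := by
    intro h
    apply hk0
    rw [hvcs, hwcs, h, sub_self]
  rcases Nat.lt_or_ge (β i₀) (γ i₀) with hlt | hge
  · exact PFAux.core hβ hγ hveq.symm hweq.symm hmemA hmaxv hlw hseg hbig hlt
  · have hlt : γ i₀ < β i₀ := lt_of_le_of_ne hge (Ne.symm hne)
    refine PFAux.core hγ hβ hweq.symm hveq.symm hmemA ?_ hlw.symm ?_ ?_ hlt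
    · intro y hy; rw [hlw]; exact hmaxv y hy
    · intro y hy hly
      rw [segment_symm]
      exact hseg y hy (by rw [← hlw]; exact hly)
    · intro i j
      obtain ⟨k, h1, h2, h3⟩ := hbig i j
      exact ⟨k, h1, h2, fun hh => h3 (by linarith)⟩
end

section
/- Every nested set for the building set B_{PF_n} = {{1},...,{n}} ∪ {S ∪ {n+1} : S ⊆ [n], |S| ≠ 1} has the form {{i}}_{i∈I} ∪ {A}_{A∈F}, where I ⊆ [n+1] with |I| ≤ 2 whenever n+1 ∈ I, F is a chain of subsets of [n+1] (excluding [n+1] itself) each containing n+1 and of size ≥ 3, and I ⊆ min(F) when F is nonempty; conversely every such collection is a nested set. -/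
/-- The building set `B_{PF_n} = {{1},…,{n}} ∪ {S ∪ {n+1} : S ⊆ [n], |S| ≠ 1}`
on `[n+1]`, where `n+1` is represented by `Fin.last n`. -/
def BPFBuilding (n : ℕ) : Set (Finset (Fin (n + 1))) :=
  {K | (Fin.last n ∉ K ∧ K.card = 1) ∨ (Fin.last n ∈ K ∧ K.card ≠ 2)}

/-- `N` is a nested set for `B_{PF_n}`: a subfamily of `B_{PF_n}` avoiding the
maximal element `[n+1]` such that (N1) any two members are comparable or
disjoint, and (N2) the union of any `k ≥ 2` pairwise disjoint members is not
in `B_{PF_n}`. -/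
def IsNestedSetPF (n : ℕ) (N : Set (Finset (Fin (n + 1)))) : Prop :=
  N ⊆ BPFBuilding n \ {Finset.univ} ∧
  (∀ A ∈ N, ∀ B ∈ N, A ⊆ B ∨ B ⊆ A ∨ Disjoint A B) ∧
  (∀ T : Finset (Finset (Fin (n + 1))), ↑T ⊆ N → 2 ≤ T.card →
    ((T : Set (Finset (Fin (n + 1)))).Pairwise Disjoint) →
    T.sup id ∉ BPFBuilding n)

/-- Characterization of the nested sets for `B_{PF_n}`: they are exactly the
collections `{{i}}_{i∈I} ∪ {A}_{A∈F}` where `I ⊆ [n+1]` with `|I| ≤ 2` whenever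
`n+1 ∈ I`, `F` is a chain of proper subsets of `[n+1]` each containing `n+1`
and of size `≥ 3`, and `I ⊆ A` for every `A ∈ F`. -/
theorem nested_set_characterization (n : ℕ) (hn : 2 ≤ n)
    (N : Set (Finset (Fin (n + 1)))) :
    IsNestedSetPF n N ↔
      ∃ (I : Finset (Fin (n + 1))) (F : Finset (Finset (Fin (n + 1)))),
        N = {K | (∃ i ∈ I, K = {i}) ∨ K ∈ F} ∧
        (Fin.last n ∈ I → I.card ≤ 2) ∧
        IsChain (· ⊆ ·) (F : Set (Finset (Fin (n + 1)))) ∧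
        (∀ A ∈ F, Fin.last n ∈ A ∧ 3 ≤ A.card ∧ A ≠ Finset.univ) ∧
        (∀ A ∈ F, I ⊆ A) := by
  classical
  set ℓ := Fin.last n with hℓdef
  constructor
  · rintro ⟨hsub, hN1, hN2⟩
    -- basic facts about members of N
    have hmem : ∀ K ∈ N, (ℓ ∉ K ∧ K.card = 1) ∨ (ℓ ∈ K ∧ K.card ≠ 2) := by
      intro K hK
      exact (hsub hK).1
    have hnuniv : ∀ K ∈ N, K ≠ Finset.univ := by
      intro K hK
      exact (hsub hK).2
    refine ⟨Finset.univ.filter (fun i => ({i} : Finset (Fin (n+1))) ∈ N),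
            Finset.univ.filter (fun A => A ∈ N ∧ 3 ≤ A.card), ?_, ?_, ?_, ?_, ?_⟩
    · -- set equality
      ext K
      simp only [Set.mem_setOf_eq, Finset.mem_filter, Finset.mem_univ, true_and]
      constructor
      · intro hK
        by_cases h1 : K.card = 1
        · obtain ⟨i, rfl⟩ := Finset.card_eq_one.mp h1
          exact Or.inl ⟨i, hK, rfl⟩
        · refine Or.inr ⟨hK, ?_⟩
          rcases hmem K hK with ⟨_, h⟩ | ⟨hl, h2⟩
          · exact absurd h h1
          · have h0 : K.card ≠ 0 := Finset.card_ne_zero_of_mem hl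
            omega
      · rintro (⟨i, hi, rfl⟩ | ⟨hA, _⟩)
        · exact hi
        · exact hA
    · -- last ∈ I → card I ≤ 2
      intro hℓI
      by_contra hcard
      push_neg at hcard
      simp only [Finset.mem_filter, Finset.mem_univ, true_and] at hℓI
      have h2 : 1 < ((Finset.univ.filter
          (fun i => ({i} : Finset (Fin (n+1))) ∈ N)).erase ℓ).card := by
        have := Finset.card_erase_of_mem
          (s := Finset.univ.filter (fun i => ({i} : Finset (Fin (n+1))) ∈ N))
          (by simpa using hℓI)
        omega
      obtain ⟨i, hi, j, hj, hij⟩ := Finset.one_lt_card.mp h2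
      have hiℓ : i ≠ ℓ := Finset.ne_of_mem_erase hi
      have hjℓ : j ≠ ℓ := Finset.ne_of_mem_erase hj
      have hiN : ({i} : Finset (Fin (n+1))) ∈ N := by
        have := Finset.mem_of_mem_erase hi
        simpa using this
      have hjN : ({j} : Finset (Fin (n+1))) ∈ N := by
        have := Finset.mem_of_mem_erase hj
        simpa using this
      set T : Finset (Finset (Fin (n+1))) := {({ℓ} : Finset (Fin (n+1))), {i}, {j}}
      have hsne : ∀ a b : Fin (n+1), a ≠ b →
          ({a} : Finset (Fin (n+1))) ≠ {b} := by
        intro a b hab h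
        exact hab (Finset.singleton_injective h)
      have hTsub : ↑T ⊆ N := by
        intro K hK
        simp only [T, Finset.coe_insert, Finset.coe_singleton, Set.mem_insert_iff,
          Set.mem_singleton_iff] at hK
        rcases hK with rfl | rfl | rfl
        · exact hℓI
        · exact hiN
        · exact hjN
      have hTcard : T.card = 3 := by
        rw [Finset.card_insert_of_notMem, Finset.card_insert_of_notMem]
        · simp
        · simp only [Finset.mem_singleton]
          exact hsne i j hij
        · simp only [Finset.mem_insert, Finset.mem_singleton]
          push_neg
          exact ⟨hsne ℓ i (Ne.symm hiℓ), hsne ℓ j (Ne.symm hjℓ)⟩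
      have hTdisj : (↑T : Set (Finset (Fin (n+1)))).Pairwise Disjoint := by
        intro a ha b hb hab
        simp only [T, Finset.coe_insert, Finset.coe_singleton, Set.mem_insert_iff,
          Set.mem_singleton_iff] at ha hb
        rcases ha with rfl | rfl | rfl <;> rcases hb with rfl | rfl | rfl <;>
          simp_all [Finset.disjoint_singleton_left, eq_comm]
      have hsup : T.sup id = {ℓ, i, j} := by
        simp [T, Finset.sup_insert, Finset.sup_singleton]
        exact Finset.insert_comm _ _ _
      refine hN2 T hTsub (by omega) hTdisj ?_
      rw [hsup]
      refine Or.inr ⟨by simp [← hℓdef], ?_⟩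
      rw [Finset.card_insert_of_notMem (by simp [Ne.symm hiℓ, Ne.symm hjℓ]),
        Finset.card_insert_of_notMem (by simp [hij])]
      simp
    · -- chain
      intro A hA B hB hAB
      simp only [Finset.coe_filter, Set.mem_setOf_eq, Finset.mem_univ,
        true_and] at hA hB
      have hℓA : ℓ ∈ A := by
        rcases hmem A hA.1 with ⟨_, h⟩ | ⟨h, _⟩
        · omega
        · exact h
      have hℓB : ℓ ∈ B := by
        rcases hmem B hB.1 with ⟨_, h⟩ | ⟨h, _⟩
        · omega
        · exact h
      rcases hN1 A hA.1 B hB.1 with h | h | h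
      · exact Or.inl h
      · exact Or.inr h
      · exact absurd hℓB (Finset.disjoint_left.mp h hℓA)
    · -- members of F
      intro A hA
      simp only [Finset.mem_filter, Finset.mem_univ, true_and] at hA
      refine ⟨?_, hA.2, hnuniv A hA.1⟩
      rcases hmem A hA.1 with ⟨_, h⟩ | ⟨h, _⟩
      · omega
      · exact h
    · -- I ⊆ A for A ∈ F
      intro A hA i hi
      simp only [Finset.mem_filter, Finset.mem_univ, true_and] at hA hi
      have hℓA : ℓ ∈ A := by
        rcases hmem A hA.1 with ⟨_, h⟩ | ⟨h, _⟩
        · omega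
        · exact h
      rcases hN1 _ hi _ hA.1 with h | h | h
      · simpa using h
      · have := Finset.card_le_card h
        simp at this
        omega
      · -- disjoint: contradiction via N2 on {{i}, A}
        exfalso
        set T : Finset (Finset (Fin (n+1))) := {({i} : Finset (Fin (n+1))), A}
        have hne : ({i} : Finset (Fin (n+1))) ≠ A := by
          intro h'
          rw [← h'] at hA
          simp at hA
        have hTsub : ↑T ⊆ N := by
          intro K hK
          simp only [T, Finset.coe_insert, Finset.coe_singleton, Set.mem_insert_iff,
            Set.mem_singleton_iff] at hK
          rcases hK with rfl | rfl
          · exact hi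
          · exact hA.1
        have hTcard : T.card = 2 := by
          rw [Finset.card_insert_of_notMem (by simpa using hne)]
          simp
        have hTdisj : (↑T : Set (Finset (Fin (n+1)))).Pairwise Disjoint := by
          intro a ha b hb hab
          simp only [T, Finset.coe_insert, Finset.coe_singleton, Set.mem_insert_iff,
            Set.mem_singleton_iff] at ha hb
          rcases ha with rfl | rfl <;> rcases hb with rfl | rfl
          · exact absurd rfl hab
          · exact h
          · exact h.symm
          · exact absurd rfl hab
        have hsup : T.sup id = {i} ∪ A := by
          simp [T, Finset.sup_insert, Finset.sup_singleton]
        refine hN2 T hTsub (by omega) hTdisj ?_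
        rw [hsup]
        refine Or.inr ⟨by simp [← hℓdef, hℓA], ?_⟩
        have hle : A.card ≤ ({i} ∪ A).card :=
          Finset.card_le_card Finset.subset_union_right
        have h3 := hA.2
        omega
  · rintro ⟨I, F, rfl, hI2, hchain, hF, hIF⟩
    have huc : Finset.univ.card = n + 1 := Finset.card_univ.trans (Fintype.card_fin _)
    refine ⟨?_, ?_, ?_⟩
    · -- subset of building set minus univ
      rintro K (⟨i, hi, rfl⟩ | hKF)
      · constructor
        · by_cases h : i = ℓ
          · exact Or.inr ⟨by simp [← hℓdef, h], by simp⟩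
          · exact Or.inl ⟨by simp [← hℓdef, Ne.symm h], by simp⟩
        · simp only [Set.mem_singleton_iff]
          intro h
          have := congrArg Finset.card h
          simp [huc] at this
          omega
      · obtain ⟨h1, h2, h3⟩ := hF K hKF
        exact ⟨Or.inr ⟨h1, by omega⟩, h3⟩
    · -- N1
      rintro A (⟨i, hi, rfl⟩ | hAF) B (⟨j, hj, rfl⟩ | hBF)
      · by_cases h : i = j
        · exact Or.inl (by simp [h])
        · exact Or.inr (Or.inr (by simp [h, Ne.symm h]))
      · exact Or.inl (Finset.singleton_subset_iff.mpr (hIF B hBF hi))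
      · exact Or.inr (Or.inl (Finset.singleton_subset_iff.mpr (hIF A hAF hj)))
      · by_cases h : A = B
        · exact Or.inl (h ▸ subset_rfl)
        · rcases hchain hAF hBF h with h' | h'
          · exact Or.inl h'
          · exact Or.inr (Or.inl h')
    · -- N2
      intro T hTN hTcard hTdisj
      have hsing : ∀ K ∈ T, ∃ i ∈ I, K = {i} := by
        intro K hK
        rcases hTN hK with hs | hKF
        · exact hs
        · exfalso
          obtain ⟨K', hK', hne⟩ := Finset.exists_mem_ne (show 1 < T.card by omega) K
          have hd : Disjoint K' K := hTdisj (Finset.mem_coe.mpr hK')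
            (Finset.mem_coe.mpr hK) hne
          rcases hTN hK' with ⟨i, hi, rfl⟩ | hK'F
          · have hiK : i ∈ K := hIF K hKF hi
            exact Finset.disjoint_left.mp hd (Finset.mem_singleton_self i) hiK
          · have hℓK := (hF K hKF).1
            have hℓK' := (hF K' hK'F).1
            exact Finset.disjoint_left.mp hd hℓK' hℓK
      -- card of the union equals card of T
      have hcardsup : (T.sup id).card = T.card := by
        rw [Finset.sup_eq_biUnion, Finset.card_biUnion]
        · rw [Finset.card_eq_sum_ones T]
          refine Finset.sum_congr rfl ?_
          intro K hK
          obtain ⟨i, _, rfl⟩ := hsing K hK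
          simp
        · intro x hx y hy hxy
          exact hTdisj (Finset.mem_coe.mpr hx) (Finset.mem_coe.mpr hy) hxy
      intro hBPF
      rcases hBPF with ⟨_, h1⟩ | ⟨hℓs, h2⟩
      · omega
      · -- ℓ ∈ union, so {ℓ} ∈ T, so ℓ ∈ I, so |I| ≤ 2 and T ⊆ singletons of I
        obtain ⟨K, hK, hℓK⟩ := Finset.mem_sup.mp hℓs
        obtain ⟨i, hiI, rfl⟩ := hsing K hK
        have hiℓ : ℓ = i := by simpa using hℓK
        subst hiℓ
        have hI2' : I.card ≤ 2 := hI2 hiI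
        have hTsub : T ⊆ I.image (fun i => ({i} : Finset (Fin (n+1)))) := by
          intro K hK
          obtain ⟨j, hjI, rfl⟩ := hsing K hK
          exact Finset.mem_image.mpr ⟨j, hjI, rfl⟩
        have := Finset.card_le_card hTsub
        have := Finset.card_image_le (s := I)
          (f := fun i => ({i} : Finset (Fin (n+1))))
        omega
end
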